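/- arXiv:1505.02245 — 7 statements merged into one kernel-verified Lean document; each statement's English description precedes it below -/
import Mathlib

section
/- Let s ↦ S(s) ∈ ℝⁿ and s ↦ σ(s) ∈ ℝ be C¹ curves with S(0) = u, satisfying the Rankine–Hugoniot condition f(S(s)) − f(u) = σ(s)(S(s) − u) for all s, where moreover ∇q = ∇η ∇f. Then for any s ≥ 0 and any vector v: q(S(s)|v) − σ(s) η(S(s)|v) = q(u|v) − σ(s) η(u|v) + ∫₀ˢ σ'(t) η(u|S(t)) dt. -/
open scoped RealInnerProductSpace

/-- relative entropy η(a|b) -/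
noncomputable def relEta {n : ℕ} (η : EuclideanSpace ℝ (Fin n) → ℝ)
    (a b : EuclideanSpace ℝ (Fin n)) : ℝ :=
  η a - η b - ⟪gradient η b, a - b⟫

/-- relative entropy flux q(a|b) -/
noncomputable def relQ {n : ℕ} (f : EuclideanSpace ℝ (Fin n) → EuclideanSpace ℝ (Fin n))
    (η q : EuclideanSpace ℝ (Fin n) → ℝ) (a b : EuclideanSpace ℝ (Fin n)) : ℝ :=
  q a - q b - ⟪gradient η b, f a - f b⟫

lemma inner_gradient_eq_fderiv {n : ℕ} (η : EuclideanSpace ℝ (Fin n) → ℝ)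
    (x h : EuclideanSpace ℝ (Fin n)) : ⟪gradient η x, h⟫ = fderiv ℝ η x h := by
  rw [gradient, InnerProductSpace.toDual_symm_apply]

/-- Lax identity: along a Hugoniot curve S(s) with speed σ(s) (S(0)=u, RH condition,
entropy-flux compatibility ∇q = ∇η ∇f), for any s ≥ 0 and any v,
q(S(s)|v) − σ(s) η(S(s)|v) = q(u|v) − σ(s) η(u|v) + ∫₀ˢ σ'(t) η(u|S(t)) dt. -/
theorem lax_identity {n : ℕ}
    (f : EuclideanSpace ℝ (Fin n) → EuclideanSpace ℝ (Fin n))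
    (η q : EuclideanSpace ℝ (Fin n) → ℝ)
    (hf : ContDiff ℝ 1 f) (hη : ContDiff ℝ 2 η)
    (hηconv : StrictConvexOn ℝ Set.univ η) (hq : ContDiff ℝ 1 q)
    (hcomp : ∀ x h, fderiv ℝ q x h = ⟪gradient η x, fderiv ℝ f x h⟫)
    (u : EuclideanSpace ℝ (Fin n)) (S : ℝ → EuclideanSpace ℝ (Fin n)) (σ : ℝ → ℝ)
    (hS : ContDiff ℝ 1 S) (hσ : ContDiff ℝ 1 σ) (hS0 : S 0 = u)
    (hRH : ∀ s, f (S s) - f u = σ s • (S s - u)) :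
    ∀ s ≥ (0:ℝ), ∀ v : EuclideanSpace ℝ (Fin n),
      relQ f η q (S s) v - σ s * relEta η (S s) v
        = relQ f η q u v - σ s * relEta η u v
          + ∫ t in (0:ℝ)..s, deriv σ t * relEta η u (S t) := by
  intro s hs v
  have hSd : ∀ t, HasDerivAt S (deriv S t) t := fun t =>
    ((hS.differentiable one_ne_zero) t).hasDerivAt
  have hfdiff : Differentiable ℝ f := hf.differentiable one_ne_zero
  have hqdiff : Differentiable ℝ q := hq.differentiable one_ne_zero
  have hηdiff : Differentiable ℝ η := hη.differentiable (by norm_num)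
  have hσd : ∀ t, HasDerivAt σ (deriv σ t) t := fun t =>
    ((hσ.differentiable one_ne_zero) t).hasDerivAt
  -- derivative of Rankine–Hugoniot
  have hRHd : ∀ t, fderiv ℝ f (S t) (deriv S t)
      = deriv σ t • (S t - u) + σ t • deriv S t := by
    intro t
    have hA : HasDerivAt (fun t => f (S t) - f u) (fderiv ℝ f (S t) (deriv S t)) t :=
      ((hfdiff (S t)).hasFDerivAt.comp_hasDerivAt t (hSd t)).sub_const (f u)
    have hB : HasDerivAt (fun t => σ t • (S t - u))
        (deriv σ t • (S t - u) + σ t • deriv S t) t := by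
      have := (hσd t).smul ((hSd t).sub_const u)
      rw [add_comm]; exact this
    have hfun : (fun t => f (S t) - f u) = fun t => σ t • (S t - u) := funext hRH
    rw [hfun] at hA
    exact hA.unique hB
  set g := gradient η with hg
  set F : ℝ → ℝ := fun t =>
    q (S t) - q u - ⟪g v, f (S t) - f u⟫ - σ t * (η (S t) - η u - ⟪g v, S t - u⟫) with hF
  have hF' : ∀ t, HasDerivAt F (deriv σ t * relEta η u (S t)) t := by
    intro t
    have hq' : HasDerivAt (fun t => q (S t)) (fderiv ℝ q (S t) (deriv S t)) t :=
      (hqdiff (S t)).hasFDerivAt.comp_hasDerivAt t (hSd t)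
    have hfS : HasDerivAt (fun t => f (S t)) (fderiv ℝ f (S t) (deriv S t)) t :=
      (hfdiff (S t)).hasFDerivAt.comp_hasDerivAt t (hSd t)
    have hηS : HasDerivAt (fun t => η (S t)) (fderiv ℝ η (S t) (deriv S t)) t :=
      (hηdiff (S t)).hasFDerivAt.comp_hasDerivAt t (hSd t)
    have hinner1 : HasDerivAt (fun t => ⟪g v, f (S t) - f u⟫)
        (⟪g v, fderiv ℝ f (S t) (deriv S t)⟫) t := by
      have := (hasDerivAt_const t (g v)).inner ℝ (hfS.sub_const (f u))
      simpa [add_comm] using this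
    have hinner2 : HasDerivAt (fun t => ⟪g v, S t - u⟫) (⟪g v, deriv S t⟫) t := by
      have := (hasDerivAt_const t (g v)).inner ℝ ((hSd t).sub_const u)
      simpa [add_comm] using this
    have hmain := ((hq'.sub_const (q u)).sub hinner1).sub
      ((hσd t).mul ((hηS.sub_const (η u)).sub hinner2))
    convert hmain using 1
    case e'_4 => rfl
    case e'_5 => rfl
    case e'_8 => rfl
    have e1 : fderiv ℝ q (S t) (deriv S t) = ⟪g (S t), fderiv ℝ f (S t) (deriv S t)⟫ :=
      hcomp (S t) (deriv S t)
    have e2 : fderiv ℝ η (S t) (deriv S t) = ⟪g (S t), deriv S t⟫ :=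
      (inner_gradient_eq_fderiv η (S t) (deriv S t)).symm
    rw [e1, e2, hRHd t, relEta]
    simp only [hg, inner_add_right, inner_smul_right, inner_sub_right, Pi.sub_apply]
    ring
  have hF0 : F 0 = 0 := by
    simp [hF, hS0]
  have hgrad_cont : Continuous g := by
    have hfd : Continuous (fderiv ℝ η) := hη.continuous_fderiv (by norm_num)
    have : g = fun x => (InnerProductSpace.toDual ℝ
        (EuclideanSpace ℝ (Fin n))).symm (fderiv ℝ η x) := rfl
    rw [this]
    exact (InnerProductSpace.toDual ℝ _).symm.continuous.comp hfd
  have hcont : Continuous (fun t => deriv σ t * relEta η u (S t)) := by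
    have h1 : Continuous (deriv σ) := hσ.continuous_deriv le_rfl
    have h2 : Continuous (fun t => relEta η u (S t)) := by
      simp only [relEta]
      exact (continuous_const.sub ((hη.continuous).comp hS.continuous)).sub
        (((hgrad_cont.comp hS.continuous)).inner
          (continuous_const.sub hS.continuous))
    exact h1.mul h2
  have hint : ∫ t in (0:ℝ)..s, deriv σ t * relEta η u (S t) = F s - F 0 :=
    intervalIntegral.integral_eq_sub_of_hasDerivAt (fun t _ => hF' t)
      (hcont.intervalIntegrable 0 s)
  rw [hint, hF0, sub_zero]
  simp only [relQ, relEta, hF, hg, inner_sub_right]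
  ring
end

section
/- Under the hypotheses of the Lax–DiPerna identity (Hugoniot curve S(s), speed σ(s) with compatibility ∇q = ∇η ∇f), for any s ≥ 0 and s₀ > 0: q(S(s)|S(s₀)) − σ(s) η(S(s)|S(s₀)) = ∫_{s₀}^{s} σ'(t) (η(u|S(t)) − η(u|S(s₀))) dt. -/
open scoped RealInnerProductSpace

lemma gradient_inner_eq {n : ℕ} (η : EuclideanSpace ℝ (Fin n) → ℝ)
    (x v : EuclideanSpace ℝ (Fin n)) :
    ⟪gradient η x, v⟫ = fderiv ℝ η x v := by
  unfold gradient
  exact InnerProductSpace.toDual_symm_apply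

/-- DiPerna-type identity: under the hypotheses of the Lax identity, for any s ≥ 0 and s₀ > 0,
q(S(s)|S(s₀)) − σ(s) η(S(s)|S(s₀)) = ∫_{s₀}^{s} σ'(t) (η(u|S(t)) − η(u|S(s₀))) dt. -/
theorem diperna_identity {n : ℕ}
    (f : EuclideanSpace ℝ (Fin n) → EuclideanSpace ℝ (Fin n))
    (η q : EuclideanSpace ℝ (Fin n) → ℝ)
    (hf : ContDiff ℝ 1 f) (hη : ContDiff ℝ 2 η)
    (hηconv : StrictConvexOn ℝ Set.univ η) (hq : ContDiff ℝ 1 q)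
    (hcomp : ∀ x h, fderiv ℝ q x h = ⟪gradient η x, fderiv ℝ f x h⟫)
    (u : EuclideanSpace ℝ (Fin n)) (S : ℝ → EuclideanSpace ℝ (Fin n)) (σ : ℝ → ℝ)
    (hS : ContDiff ℝ 1 S) (hσ : ContDiff ℝ 1 σ) (hS0 : S 0 = u)
    (hRH : ∀ s, f (S s) - f u = σ s • (S s - u)) :
    ∀ s ≥ (0:ℝ), ∀ s₀ > (0:ℝ),
      relQ f η q (S s) (S s₀) - σ s * relEta η (S s) (S s₀)
        = ∫ t in s₀..s, deriv σ t * (relEta η u (S t) - relEta η u (S s₀)) := by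
  intro s hs s₀ hs₀
  set b := S s₀ with hb
  set c := gradient η b with hc
  have hηd : Differentiable ℝ η := hη.differentiable two_ne_zero
  have hfd : Differentiable ℝ f := hf.differentiable one_ne_zero
  have hqd : Differentiable ℝ q := hq.differentiable one_ne_zero
  have hSd : Differentiable ℝ S := hS.differentiable one_ne_zero
  have hσd : Differentiable ℝ σ := hσ.differentiable one_ne_zero
  set F : ℝ → ℝ := fun t =>
    (q (S t) - q b - (⟪c, f (S t)⟫ - ⟪c, f b⟫))
      - σ t * (η (S t) - η b - (⟪c, S t⟫ - ⟪c, b⟫)) with hF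
  set g : ℝ → ℝ := fun t => deriv σ t * (relEta η u (S t) - relEta η u b) with hg
  have key : ∀ t : ℝ, HasDerivAt F (g t) t := by
    intro t
    have hS' : HasDerivAt S (deriv S t) t := (hSd t).hasDerivAt
    have hσ' : HasDerivAt σ (deriv σ t) t := (hσd t).hasDerivAt
    set D : EuclideanSpace ℝ (Fin n) := σ t • deriv S t + deriv σ t • (S t - u) with hD
    have hfS_eq : (fun s => f (S s)) = fun s => σ s • (S s - u) + f u := by
      funext s
      have h := hRH s
      have : f (S s) = σ s • (S s - u) + f u := by
        rw [← h]; abel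
      exact this
    have hfS2 : HasDerivAt (fun s => f (S s)) D t := by
      rw [hfS_eq]
      exact (hσ'.smul (hS'.sub_const u)).add_const (f u)
    have hfS1 : HasDerivAt (fun s => f (S s)) (fderiv ℝ f (S t) (deriv S t)) t :=
      (hfd (S t)).hasFDerivAt.comp_hasDerivAt t hS'
    have hDeq : fderiv ℝ f (S t) (deriv S t) = D := hfS1.unique hfS2
    have h1 : HasDerivAt (fun s => q (S s)) (⟪gradient η (S t), D⟫) t := by
      have := (hqd (S t)).hasFDerivAt.comp_hasDerivAt t hS'
      rwa [hcomp, hDeq] at this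
    have h2 : HasDerivAt (fun s => ⟪c, f (S s)⟫) (⟪c, D⟫) t := by
      have := (innerSL ℝ c).hasFDerivAt.comp_hasDerivAt t hfS2
      simp at this
      exact this
    have h3 : HasDerivAt (fun s => η (S s)) (⟪gradient η (S t), deriv S t⟫) t := by
      have := (hηd (S t)).hasFDerivAt.comp_hasDerivAt t hS'
      rwa [← gradient_inner_eq] at this
    have h4 : HasDerivAt (fun s => ⟪c, S s⟫) (⟪c, deriv S t⟫) t := by
      have := (innerSL ℝ c).hasFDerivAt.comp_hasDerivAt t hS'
      simp at this
      exact this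
    have hder : HasDerivAt F
        ((⟪gradient η (S t), D⟫ - ⟪c, D⟫)
          - (deriv σ t * (η (S t) - η b - (⟪c, S t⟫ - ⟪c, b⟫))
            + σ t * (⟪gradient η (S t), deriv S t⟫ - ⟪c, deriv S t⟫))) t := by
      exact ((h1.sub_const (q b)).sub ((h2.sub_const ⟪c, f b⟫))).sub
        (hσ'.mul (((h3.sub_const (η b)).sub ((h4.sub_const ⟪c, b⟫)))))
    have : (⟪gradient η (S t), D⟫ - ⟪c, D⟫)
          - (deriv σ t * (η (S t) - η b - (⟪c, S t⟫ - ⟪c, b⟫))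
            + σ t * (⟪gradient η (S t), deriv S t⟫ - ⟪c, deriv S t⟫)) = g t := by
      simp only [hg, hD, relEta, inner_add_right, inner_sub_right, real_inner_smul_right]
      ring
    rwa [this] at hder
  have hgradcont : Continuous (gradient η) := by
    have hfc : Continuous (fderiv ℝ η) := hη.continuous_fderiv two_ne_zero
    exact (InnerProductSpace.toDual ℝ (EuclideanSpace ℝ (Fin n))).symm.continuous.comp hfc
  have hgcont : Continuous g := by
    have h1 : Continuous (deriv σ) := hσ.continuous_deriv le_rfl
    have h2 : Continuous fun t => relEta η u (S t) := by
      simp only [relEta]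
      exact (continuous_const.sub (hη.continuous.comp hS.continuous)).sub
        ((hgradcont.comp hS.continuous).inner (continuous_const.sub hS.continuous))
    exact h1.mul (h2.sub continuous_const)
  have hint := intervalIntegral.integral_eq_sub_of_hasDerivAt
    (f := F) (f' := g) (a := s₀) (b := s)
    (fun t _ => key t) (hgcont.intervalIntegrable s₀ s)
  have hFs0 : F s₀ = 0 := by simp [hF, hb]
  have hFs : F s = relQ f η q (S s) b - σ s * relEta η (S s) b := by
    simp only [hF, relQ, relEta, inner_sub_right, hc]
  rw [hg] at hint
  rw [hint, hFs0, hFs]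
  ring
end

section
/- Suppose η is C², strictly convex with ∇²η(u_l) > 0, f is C² with ∇²η(u_l)∇f(u_l) symmetric, and ∇q = ∇η ∇f. If λ₁(u_l) denotes the smallest eigenvalue of ∇f(u_l), then for any σ₀ < λ₁(u_l) there exist ε₀ > 0 and β > 0 such that for all u with |u − u_l| < ε₀: −q(u|u_l) + σ₀ η(u|u_l) ≤ −β η(u|u_l). -/
open scoped RealInnerProductSpace

set_option maxHeartbeats 1000000

open InnerProductSpace

/-- positive definite bound on sphere -/
lemma posdef_lower_bound {E : Type*} [NormedAddCommGroup E] [InnerProductSpace ℝ E]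
    [FiniteDimensional ℝ E] (H : E →L[ℝ] E) (hHpos : ∀ h : E, h ≠ 0 → 0 < ⟪H h, h⟫) :
    ∃ c > (0:ℝ), ∀ h : E, c * ‖h‖^2 ≤ ⟪H h, h⟫ := by
  rcases subsingleton_or_nontrivial E with hE | hE
  · exact ⟨1, one_pos, fun h => by
      rw [Subsingleton.elim h 0]; simp⟩
  · have hsph : (Metric.sphere (0:E) 1).Nonempty := by
      simp [NormedSpace.sphere_nonempty]
    have hc : IsCompact (Metric.sphere (0:E) 1) := isCompact_sphere _ _
    have hcont : ContinuousOn (fun h : E => ⟪H h, h⟫) (Metric.sphere (0:E) 1) :=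
      (continuous_inner.comp ((H.continuous).prodMk continuous_id)).continuousOn
    obtain ⟨v, hv, hvmin⟩ := hc.exists_isMinOn hsph hcont
    have hvnorm : ‖v‖ = 1 := by simpa using hv
    have hvne : v ≠ 0 := by intro h; rw [h] at hvnorm; simp at hvnorm
    refine ⟨⟪H v, v⟫, hHpos v hvne, fun h => ?_⟩
    rcases eq_or_ne h 0 with rfl | hne
    · simp
    · have hn : ‖h‖ ≠ 0 := norm_ne_zero_iff.mpr hne
      have hu : (‖h‖⁻¹ • h) ∈ Metric.sphere (0:E) 1 := by
        simp [norm_smul, abs_of_nonneg, inv_mul_cancel₀ hn]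
      have hmin2 : ⟪H v, v⟫ ≤ ⟪H (‖h‖⁻¹ • h), ‖h‖⁻¹ • h⟫ := hvmin hu
      have hexp : ⟪H (‖h‖⁻¹ • h), ‖h‖⁻¹ • h⟫ = ‖h‖⁻¹ * ‖h‖⁻¹ * ⟪H h, h⟫ := by
        rw [map_smul, real_inner_smul_left, real_inner_smul_right]; ring
      rw [hexp] at hmin2
      have h2 : (0:ℝ) < ‖h‖^2 := by positivity
      have hinv : ‖h‖⁻¹ * ‖h‖⁻¹ * ‖h‖^2 = 1 := by field_simp
      calc ⟪H v, v⟫ * ‖h‖^2 ≤ (‖h‖⁻¹ * ‖h‖⁻¹ * ⟪H h, h⟫) * ‖h‖^2 :=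
            mul_le_mul_of_nonneg_right hmin2 (le_of_lt h2)
        _ = ⟪H h, h⟫ := by
            rw [mul_comm (‖h‖⁻¹ * ‖h‖⁻¹) _, mul_assoc, hinv, mul_one]

lemma rayleigh_spectrum_bound {E : Type*} [NormedAddCommGroup E] [InnerProductSpace ℝ E]
    [FiniteDimensional ℝ E] (H A : E →L[ℝ] E)
    (hHsym : ∀ h k : E, ⟪H h, k⟫ = ⟪h, H k⟫)
    (hHpos : ∀ h : E, h ≠ 0 → 0 < ⟪H h, h⟫)
    (hHA : ∀ h k : E, ⟪H (A h), k⟫ = ⟪h, H (A k)⟫)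
    (lam1 : ℝ) (hmin : ∀ μ ∈ spectrum ℝ A, lam1 ≤ μ) :
    ∀ h : E, lam1 * ⟪H h, h⟫ ≤ ⟪H (A h), h⟫ := by
  rcases subsingleton_or_nontrivial E with hE | hE
  · intro h; rw [Subsingleton.elim h 0]; simp
  have hsph : (Metric.sphere (0:E) 1).Nonempty := by simp [NormedSpace.sphere_nonempty]
  have hc : IsCompact (Metric.sphere (0:E) 1) := isCompact_sphere _ _
  set φ : E → ℝ := fun h => ⟪H (A h), h⟫ / ⟪H h, h⟫ with hφ
  have hcont : ContinuousOn φ (Metric.sphere (0:E) 1) := by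
    apply ContinuousOn.div
    · exact (continuous_inner.comp ((H.continuous.comp A.continuous).prodMk continuous_id)).continuousOn
    · exact (continuous_inner.comp (H.continuous.prodMk continuous_id)).continuousOn
    · intro x hx
      have hxne : x ≠ 0 := by
        intro h0; rw [h0] at hx; simp at hx
      exact ne_of_gt (hHpos x hxne)
  obtain ⟨v, hv, hvmin⟩ := hc.exists_isMinOn hsph hcont
  have hvnorm : ‖v‖ = 1 := by simpa using hv
  have hvne : v ≠ 0 := by intro h; rw [h] at hvnorm; simp at hvnorm
  set μ : ℝ := φ v with hμ
  set B : E → ℝ := fun h => ⟪H (A h), h⟫ - μ * ⟪H h, h⟫ with hB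
  -- nonnegativity of B
  have hBnn : ∀ h : E, 0 ≤ B h := by
    intro h
    rcases eq_or_ne h 0 with rfl | hne
    · simp [hB]
    · have hn : ‖h‖ ≠ 0 := norm_ne_zero_iff.mpr hne
      set u : E := ‖h‖⁻¹ • h with hu
      have hune : u ≠ 0 := smul_ne_zero (inv_ne_zero hn) hne
      have husph : u ∈ Metric.sphere (0:E) 1 := by
        simp [hu, norm_smul, inv_mul_cancel₀ hn]
      have hmin2 : μ ≤ φ u := hvmin husph
      have hupos : 0 < ⟪H u, u⟫ := hHpos u hune
      have hBu : 0 ≤ B u := by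
        have h1 : μ * ⟪H u, u⟫ ≤ ⟪H (A u), u⟫ := by
          rw [hφ] at hmin2
          have := (le_div_iff₀ hupos).mp hmin2
          linarith
        simp only [hB]; linarith
      have hscale : B h = ‖h‖^2 * B u := by
        simp only [hB, hu, map_smul, real_inner_smul_left, real_inner_smul_right]
        have : ‖h‖^2 * (‖h‖⁻¹ * (‖h‖⁻¹ * ⟪H (A h), h⟫)) = ⟪H (A h), h⟫ := by
          field_simp
        have h2 : ‖h‖^2 * (μ * (‖h‖⁻¹ * (‖h‖⁻¹ * ⟪H h, h⟫))) = μ * ⟪H h, h⟫ := by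
          field_simp
        nlinarith [this, h2]
      rw [hscale]; positivity
  have hBv : B v = 0 := by
    have hvpos : 0 < ⟪H v, v⟫ := hHpos v hvne
    simp only [hB, hμ, hφ]
    field_simp
    ring
  -- Euler-Lagrange: H (A v) = μ • H v
  have heuler : ∀ w : E, ⟪H (A v) - μ • H v, w⟫ = 0 := by
    intro w
    set b : ℝ := ⟪H (A v) - μ • H v, w⟫ with hb
    have hbeq : b = ⟪H (A v), w⟫ - μ * ⟪H v, w⟫ := by
      rw [hb, inner_sub_left, real_inner_smul_left]
    have hexp : ∀ t : ℝ, B (v + t • w) = B v + 2 * t * b + t^2 * B w := by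
      intro t
      have hsymA : ⟪H (A w), v⟫ = ⟪H (A v), w⟫ := by
        rw [hHA w v, real_inner_comm]
      have hsymH : ⟪H w, v⟫ = ⟪H v, w⟫ := by
        rw [hHsym w v, real_inner_comm]
      simp only [hB, map_add, map_smul, inner_add_left, inner_add_right,
        real_inner_smul_left, real_inner_smul_right, hbeq]
      rw [hsymA, hsymH]; ring
    have hkey : ∀ t : ℝ, 0 ≤ 2 * t * b + t^2 * B w := by
      intro t
      have := hBnn (v + t • w)
      rw [hexp t, hBv] at this; linarith
    by_contra hbne
    have hBw : 0 ≤ B w := hBnn w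
    have hd : (0:ℝ) < B w + 1 := by linarith
    have hthis := hkey (-b / (B w + 1))
    have hb2 : 0 < b^2 := by positivity
    have hmul : 0 ≤ (2 * (-b / (B w + 1)) * b + (-b / (B w + 1))^2 * B w) * (B w + 1)^2 :=
      mul_nonneg hthis (by positivity)
    have hexpand : (2 * (-b / (B w + 1)) * b + (-b / (B w + 1))^2 * B w) * (B w + 1)^2
        = -2 * b^2 * (B w + 1) + b^2 * B w := by
      field_simp
    rw [hexpand] at hmul
    nlinarith [hb2, hBw]
  have hz : H (A v) - μ • H v = 0 := by
    have := heuler (H (A v) - μ • H v)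
    exact inner_self_eq_zero.mp this
  have hAv : A v = μ • v := by
    have hHy : H (A v - μ • v) = 0 := by
      rw [map_sub, map_smul]; exact hz
    by_contra hne
    have hyne : A v - μ • v ≠ 0 := sub_ne_zero.mpr hne
    have := hHpos _ hyne
    rw [hHy] at this; simp at this
  have hμspec : μ ∈ spectrum ℝ A := by
    by_contra hns
    have hunit : IsUnit (algebraMap ℝ (E →L[ℝ] E) μ - A) := spectrum.notMem_iff.mp hns
    obtain ⟨un, hun⟩ := hunit
    have happ : (algebraMap ℝ (E →L[ℝ] E) μ - A) v = 0 := by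
      rw [ContinuousLinearMap.sub_apply, Algebra.algebraMap_eq_smul_one]
      rw [ContinuousLinearMap.smul_apply, ContinuousLinearMap.one_apply, hAv, sub_self]
    have h1 : ((↑un⁻¹ : E →L[ℝ] E) * ↑un) v = v := by
      rw [Units.inv_mul]; rfl
    rw [ContinuousLinearMap.mul_apply, hun, happ, map_zero] at h1
    exact hvne h1.symm
  have hlam : lam1 ≤ μ := hmin μ hμspec
  intro h
  have hBh := hBnn h
  rcases eq_or_ne h 0 with rfl | hne
  · simp
  · have hpos := hHpos h hne
    simp only [hB] at hBh
    nlinarith [mul_le_mul_of_nonneg_right hlam (le_of_lt hpos)]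

noncomputable def dualToVec (E : Type*) [NormedAddCommGroup E] [InnerProductSpace ℝ E]
    [CompleteSpace E] : StrongDual ℝ E →L[ℝ] E :=
  LinearMap.mkContinuous
    { toFun := fun L => (toDual ℝ E).symm L,
      map_add' := fun a b => map_add _ a b,
      map_smul' := fun c a => by
        simp only [RingHom.id_apply]
        rw [LinearIsometryEquiv.map_smulₛₗ]
        simp }
    1 (fun a => by simp)


theorem dissipation_aux {E : Type*} [NormedAddCommGroup E] [InnerProductSpace ℝ E]
    [FiniteDimensional ℝ E]
    (f : E → E) (η q : E → ℝ) (ul : E)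
    (hf : ContDiff ℝ 2 f) (hη : ContDiff ℝ 2 η) (hq : ContDiff ℝ 2 q)
    (hcomp : ∀ x h, fderiv ℝ q x h = ⟪gradient η x, fderiv ℝ f x h⟫)
    (Hess : E →L[ℝ] E)
    (hHess : Hess = fderiv ℝ (gradient η) ul)
    (hHpos : ∀ h : E, h ≠ 0 → 0 < ⟪Hess h, h⟫)
    (hHAsym : ∀ h k : E,
      ⟪Hess (fderiv ℝ f ul h), k⟫ = ⟪h, Hess (fderiv ℝ f ul k)⟫)
    (lam1 : ℝ) (hmem : lam1 ∈ spectrum ℝ (fderiv ℝ f ul))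
    (hmin : ∀ μ ∈ spectrum ℝ (fderiv ℝ f ul), lam1 ≤ μ)
    (σ₀ : ℝ) (hσ₀ : σ₀ < lam1) :
    ∃ ε₀ > (0:ℝ), ∃ β > (0:ℝ), ∀ u : E, ‖u - ul‖ < ε₀ →
      -(q u - q ul - ⟪gradient η ul, f u - f ul⟫)
          + σ₀ * (η u - η ul - ⟪gradient η ul, u - ul⟫)
        ≤ -β * (η u - η ul - ⟪gradient η ul, u - ul⟫) := by
  set A : E →L[ℝ] E := fderiv ℝ f ul with hA
  set Gl : E := gradient η ul with hGl
  set D : E → (E →L[ℝ] ℝ) := fderiv ℝ η with hD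
  set D2 : E →L[ℝ] (E →L[ℝ] ℝ) := fderiv ℝ (fderiv ℝ η) ul with hD2
  -- basic differentiability
  have hηd : Differentiable ℝ η := hη.differentiable two_ne_zero
  have hfd : Differentiable ℝ f := hf.differentiable two_ne_zero
  have hqd : Differentiable ℝ q := hq.differentiable two_ne_zero
  have hD1 : ContDiff ℝ 1 (fderiv ℝ η) := hη.fderiv_right (by norm_num)
  have hDd : Differentiable ℝ (fderiv ℝ η) := hD1.differentiable one_ne_zero
  have hD2cont : Continuous (fderiv ℝ (fderiv ℝ η)) := hD1.continuous_fderiv one_ne_zero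
  have hfD1 : ContDiff ℝ 1 (fderiv ℝ f) := hf.fderiv_right (by norm_num)
  have hfDcont : Continuous (fderiv ℝ f) := hfD1.continuous
  -- gradient bridge
  have hgrad : ∀ (x : E) (w : E), ⟪gradient η x, w⟫ = fderiv ℝ η x w :=
    fun x w => InnerProductSpace.toDual_symm_apply
  -- Hess = dualToVec ∘ D2
  have hHessEq : Hess = (dualToVec E).comp D2 := by
    rw [hHess]
    have hgradeq : gradient η = fun x => (dualToVec E) (fderiv ℝ η x) := rfl
    rw [hgradeq]
    exact (((dualToVec E).hasFDerivAt).comp ul (hDd ul).hasFDerivAt).fderiv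
  have hHD2 : ∀ v w : E, ⟪Hess v, w⟫ = D2 v w := by
    intro v w
    rw [hHessEq]
    exact InnerProductSpace.toDual_symm_apply
  have hD2sym : ∀ v w : E, D2 v w = D2 w v := fun v w =>
    second_derivative_symmetric (fun y => (hηd y).hasFDerivAt) (hDd ul).hasFDerivAt v w
  have hHsym : ∀ v w : E, ⟪Hess v, w⟫ = ⟪v, Hess w⟫ := by
    intro v w
    rw [hHD2, real_inner_comm, hHD2]
    exact hD2sym v w
  -- key spectral bound
  have hkey : ∀ h : E, lam1 * ⟪Hess h, h⟫ ≤ ⟪Hess (A h), h⟫ :=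
    rayleigh_spectrum_bound Hess A hHsym hHpos hHAsym lam1 hmin
  obtain ⟨c0, hc0, hc0le⟩ := posdef_lower_bound Hess hHpos
  -- constants
  obtain ⟨σ, β, hβpos, hσlt, hσβ⟩ : ∃ σ β : ℝ, 0 < β ∧ σ < lam1 ∧ σ = σ₀ + β :=
    ⟨(σ₀ + lam1) / 2, (lam1 - σ₀) / 2, by linarith, by linarith, by ring⟩
  obtain ⟨δ, hδpos, hδ1, hδK⟩ : ∃ δ : ℝ, 0 < δ ∧ δ ≤ 1 ∧
      δ * (‖D2‖ + |σ| + ‖A‖ + 1) ≤ (lam1 - σ) * c0 := by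
    set K : ℝ := ‖D2‖ + |σ| + ‖A‖ + 1 with hK
    have hKpos : 0 < K := by positivity
    refine ⟨min 1 ((lam1 - σ) * c0 / K), ?_, min_le_left _ _, ?_⟩
    · exact lt_min one_pos (div_pos (mul_pos (by linarith) hc0) hKpos)
    · calc min 1 ((lam1 - σ) * c0 / K) * K ≤ ((lam1 - σ) * c0 / K) * K := by
            apply mul_le_mul_of_nonneg_right (min_le_right _ _) (le_of_lt hKpos)
        _ = (lam1 - σ) * c0 := by field_simp
  -- continuity radii
  obtain ⟨r1, hr1pos, hr1⟩ : ∃ r > (0:ℝ), ∀ x : E, dist x ul < r →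
      ‖fderiv ℝ (fderiv ℝ η) x - D2‖ ≤ δ := by
    obtain ⟨r, hr, h⟩ := (Metric.continuousAt_iff (f := fderiv ℝ (fderiv ℝ η)) (a := ul)).mp (hD2cont.continuousAt (x := ul)) δ hδpos
    exact ⟨r, hr, fun x hx => by
      have := h hx
      have e := dist_eq_norm (fderiv ℝ (fderiv ℝ η) x) D2
      exact le_of_lt (by exact e ▸ this)⟩
  obtain ⟨r2, hr2pos, hr2⟩ : ∃ r > (0:ℝ), ∀ x : E, dist x ul < r →
      ‖fderiv ℝ f x - A‖ ≤ δ := by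
    obtain ⟨r, hr, h⟩ := Metric.continuousAt_iff.mp (by exact hfDcont.continuousAt (x := ul)) δ hδpos
    exact ⟨r, hr, fun x hx => by
      have := h hx
      rw [dist_eq_norm] at this
      exact le_of_lt this⟩
  set ε₀ : ℝ := min r1 r2 with hε₀def
  have hε₀pos : 0 < ε₀ := lt_min hr1pos hr2pos
  -- MVT bound on the ball
  have hMVT : ∀ x ∈ Metric.ball ul ε₀, ‖(D x - D ul) - D2 (x - ul)‖ ≤ δ * ‖x - ul‖ := by
    intro x hx
    have hconv : Convex ℝ (Metric.ball ul ε₀) := convex_ball ul ε₀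
    have hul : ul ∈ Metric.ball ul ε₀ := Metric.mem_ball_self hε₀pos
    have hb : ∀ z ∈ Metric.ball ul ε₀, ‖fderiv ℝ (fderiv ℝ η) z - D2‖ ≤ δ := by
      intro z hz
      apply hr1
      calc dist z ul < ε₀ := Metric.mem_ball.mp hz
        _ ≤ r1 := min_le_left _ _
    exact hconv.norm_image_sub_le_of_norm_fderiv_le' (f := fderiv ℝ η) (φ := D2) (C := δ)
      (fun z _ => hDd z) hb hul hx
  have hDfball : ∀ x ∈ Metric.ball ul ε₀, ‖fderiv ℝ f x - A‖ ≤ δ := by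
    intro z hz
    apply hr2
    calc dist z ul < ε₀ := Metric.mem_ball.mp hz
      _ ≤ r2 := min_le_right _ _
  refine ⟨ε₀, hε₀pos, β, hβpos, fun u hu => ?_⟩
  set h : E := u - ul with hh
  set φ : ℝ → ℝ := fun t =>
    -(q (ul + t • h) - q ul - ⟪Gl, f (ul + t • h) - f ul⟫)
      + σ * (η (ul + t • h) - η ul - ⟪Gl, (ul + t • h) - ul⟫) with hφ
  -- derivative of φ
  have hline : ∀ t : ℝ, HasDerivAt (fun s : ℝ => ul + s • h) h t := by
    intro t
    simpa using ((hasDerivAt_id t).smul_const h).const_add ul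
  have hφderiv : ∀ t : ℝ, HasDerivAt φ
      ((D (ul + t • h) - D ul) (σ • h - fderiv ℝ f (ul + t • h) h)) t := by
    intro t
    set x : E := ul + t • h with hx
    have hq1 : HasDerivAt (fun s : ℝ => q (ul + s • h)) (fderiv ℝ q x h) t :=
      (hqd x).hasFDerivAt.comp_hasDerivAt t (hline t)
    have hf1 : HasDerivAt (fun s : ℝ => ⟪Gl, f (ul + s • h) - f ul⟫)
        (⟪Gl, fderiv ℝ f x h⟫) t := by
      have := (innerSL ℝ Gl).hasFDerivAt.comp_hasDerivAt t
        (((hfd x).hasFDerivAt.comp_hasDerivAt t (hline t)).sub_const (f ul))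
      simpa [Function.comp_def] using this
    have hη1 : HasDerivAt (fun s : ℝ => η (ul + s • h)) (D x h) t :=
      (hηd x).hasFDerivAt.comp_hasDerivAt t (hline t)
    have hl1 : HasDerivAt (fun s : ℝ => ⟪Gl, (ul + s • h) - ul⟫) (⟪Gl, h⟫) t := by
      have := (innerSL ℝ Gl).hasFDerivAt.comp_hasDerivAt t ((hline t).sub_const ul)
      simpa [Function.comp_def] using this
    have hcomb : HasDerivAt φ
        (-(fderiv ℝ q x h - ⟪Gl, fderiv ℝ f x h⟫) + σ * (D x h - ⟪Gl, h⟫)) t :=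
      (((hq1.sub_const (q ul)).sub hf1).neg).add (((hη1.sub_const (η ul)).sub hl1).const_mul σ)
    have heq : -(fderiv ℝ q x h - ⟪Gl, fderiv ℝ f x h⟫) + σ * (D x h - ⟪Gl, h⟫)
        = (D x - D ul) (σ • h - fderiv ℝ f x h) := by
      have e1 : fderiv ℝ q x h = D x (fderiv ℝ f x h) := by
        rw [hcomp x h]; exact hgrad x _
      have e2 : ∀ y : E, ⟪Gl, y⟫ = D ul y := fun y => hgrad ul y
      rw [e1, e2, e2]
      simp only [ContinuousLinearMap.sub_apply, map_sub, map_smul, smul_eq_mul]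
      ring
    rw [← heq]
    exact hcomb
  -- the sign estimate
  have hsign : ∀ t ∈ Set.Icc (0:ℝ) 1,
      (D (ul + t • h) - D ul) (σ • h - fderiv ℝ f (ul + t • h) h) ≤ 0 := by
    intro t ht
    obtain ⟨ht0, ht1⟩ := ht
    set x : E := ul + t • h with hx
    have hxul : x - ul = t • h := by rw [hx]; abel
    have hxball : x ∈ Metric.ball ul ε₀ := by
      rw [Metric.mem_ball, dist_eq_norm, hxul, norm_smul, Real.norm_eq_abs,
        abs_of_nonneg ht0]
      calc t * ‖h‖ ≤ 1 * ‖h‖ := mul_le_mul_of_nonneg_right ht1 (norm_nonneg h)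
        _ = ‖h‖ := one_mul _
        _ < ε₀ := hu
    set L : E →L[ℝ] ℝ := D x - D ul with hL
    set R : E →L[ℝ] ℝ := L - D2 (x - ul) with hR
    have hRnorm : ‖R‖ ≤ δ * (t * ‖h‖) := by
      have hm := hMVT x hxball
      rw [hxul, norm_smul, Real.norm_eq_abs, abs_of_nonneg ht0] at hm
      calc ‖R‖ = ‖(D x - D ul) - D2 (t • h)‖ := by rw [hR, hL, hxul]
        _ ≤ δ * (t * ‖h‖) := by rw [← mul_assoc] at hm ⊢; exact hm
    set y : E := σ • h - fderiv ℝ f x h with hy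
    have hy' : y = σ • h - A h - (fderiv ℝ f x - A) h := by
      rw [hy, ContinuousLinearMap.sub_apply]; abel
    have hynorm : ‖y‖ ≤ (|σ| + ‖A‖ + δ) * ‖h‖ := by
      rw [hy']
      calc ‖σ • h - A h - (fderiv ℝ f x - A) h‖
          ≤ ‖σ • h - A h‖ + ‖(fderiv ℝ f x - A) h‖ := norm_sub_le _ _
        _ ≤ (‖σ • h‖ + ‖A h‖) + ‖fderiv ℝ f x - A‖ * ‖h‖ := by
            gcongr
            · exact norm_sub_le _ _
            · exact (fderiv ℝ f x - A).le_opNorm h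
        _ ≤ (|σ| * ‖h‖ + ‖A‖ * ‖h‖) + δ * ‖h‖ := by
            gcongr
            · rw [norm_smul, Real.norm_eq_abs]
            · exact A.le_opNorm h
            · exact hDfball x hxball
        _ = (|σ| + ‖A‖ + δ) * ‖h‖ := by ring
    have hLy : L y = t * (D2 h y) + R y := by
      have hRyval : R y = L y - t * (D2 h y) := by
        rw [hR, ContinuousLinearMap.sub_apply, hxul, map_smul,
          ContinuousLinearMap.smul_apply, smul_eq_mul]
      rw [hRyval]; ring
    -- estimate D2 h y
    have hD2hy : D2 h y ≤ (σ - lam1) * c0 * ‖h‖^2 + δ * ‖D2‖ * ‖h‖^2 := by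
      have hsplit : D2 h y = σ * (D2 h h) - D2 h (A h) - D2 h ((fderiv ℝ f x - A) h) := by
        have e : fderiv ℝ f x h = A h + (fderiv ℝ f x - A) h := by
          rw [ContinuousLinearMap.sub_apply]; abel
        rw [hy, e, map_sub, map_smul, map_add]
        simp only [smul_eq_mul]
        ring
      have h1 : σ * (D2 h h) - D2 h (A h) ≤ (σ - lam1) * ⟪Hess h, h⟫ := by
        have e1 : D2 h h = ⟪Hess h, h⟫ := (hHD2 h h).symm
        have e2 : D2 h (A h) = ⟪Hess (A h), h⟫ := by
          rw [← hHD2 h (A h), hHsym h (A h), real_inner_comm]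
        rw [e1, e2]
        have := hkey h
        linarith
      have h2 : (σ - lam1) * ⟪Hess h, h⟫ ≤ (σ - lam1) * (c0 * ‖h‖^2) := by
        apply mul_le_mul_of_nonpos_left _ (by linarith : σ - lam1 ≤ 0)
        exact hc0le h
      have h3 : |D2 h ((fderiv ℝ f x - A) h)| ≤ ‖D2‖ * ‖h‖ * (δ * ‖h‖) := by
        calc |D2 h ((fderiv ℝ f x - A) h)| ≤ ‖D2 h‖ * ‖(fderiv ℝ f x - A) h‖ := by
              rw [← Real.norm_eq_abs]
              exact (D2 h).le_opNorm _
          _ ≤ (‖D2‖ * ‖h‖) * (‖fderiv ℝ f x - A‖ * ‖h‖) := by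
              gcongr
              · exact D2.le_opNorm h
              · exact (fderiv ℝ f x - A).le_opNorm h
          _ ≤ (‖D2‖ * ‖h‖) * (δ * ‖h‖) := by
              gcongr
              exact hDfball x hxball
          _ = ‖D2‖ * ‖h‖ * (δ * ‖h‖) := rfl
      have h4 := abs_le.mp h3
      rw [hsplit]
      have h5 : σ * (D2 h h) - D2 h (A h) ≤ (σ - lam1) * (c0 * ‖h‖^2) := le_trans h1 h2
      have h6 : ‖D2‖ * ‖h‖ * (δ * ‖h‖) = δ * ‖D2‖ * ‖h‖^2 := by ring
      rw [h6] at h3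
      have h7 := (abs_le.mp h3).1
      linarith [h5, h7]
    have hRy : |R y| ≤ δ * (t * ‖h‖) * ((|σ| + ‖A‖ + δ) * ‖h‖) := by
      calc |R y| ≤ ‖R‖ * ‖y‖ := by rw [← Real.norm_eq_abs]; exact R.le_opNorm y
        _ ≤ δ * (t * ‖h‖) * ((|σ| + ‖A‖ + δ) * ‖h‖) := by
            apply mul_le_mul hRnorm hynorm (norm_nonneg y)
            positivity
    -- combine
    have ht2 : δ * (t * ‖h‖) * ((|σ| + ‖A‖ + δ) * ‖h‖) ≤
        t * ‖h‖^2 * (δ * (|σ| + ‖A‖ + 1)) := by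
      have e : δ * (t * ‖h‖) * ((|σ| + ‖A‖ + δ) * ‖h‖)
          = t * ‖h‖^2 * (δ * (|σ| + ‖A‖ + δ)) := by ring
      rw [e]
      apply mul_le_mul_of_nonneg_left _ (mul_nonneg ht0 (sq_nonneg _))
      apply mul_le_mul_of_nonneg_left _ (le_of_lt hδpos)
      linarith
    have hfinal : L y ≤ t * ‖h‖^2 * ((σ - lam1) * c0 + δ * (‖D2‖ + |σ| + ‖A‖ + 1)) := by
      have hD2' : t * (D2 h y) ≤ t * ((σ - lam1) * c0 * ‖h‖^2 + δ * ‖D2‖ * ‖h‖^2) :=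
        mul_le_mul_of_nonneg_left hD2hy ht0
      have hRy2 : R y ≤ t * ‖h‖^2 * (δ * (|σ| + ‖A‖ + 1)) :=
        le_trans (le_trans (le_abs_self _) hRy) ht2
      rw [hLy]
      calc t * (D2 h y) + R y
          ≤ t * ((σ - lam1) * c0 * ‖h‖^2 + δ * ‖D2‖ * ‖h‖^2)
            + t * ‖h‖^2 * (δ * (|σ| + ‖A‖ + 1)) := add_le_add hD2' hRy2
        _ = t * ‖h‖^2 * ((σ - lam1) * c0 + δ * (‖D2‖ + |σ| + ‖A‖ + 1)) := by ring
    have hnonpos : (σ - lam1) * c0 + δ * (‖D2‖ + |σ| + ‖A‖ + 1) ≤ 0 := by linarith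
    calc L y ≤ t * ‖h‖^2 * ((σ - lam1) * c0 + δ * (‖D2‖ + |σ| + ‖A‖ + 1)) := hfinal
      _ ≤ 0 := mul_nonpos_of_nonneg_of_nonpos (mul_nonneg ht0 (sq_nonneg _)) hnonpos
  -- antitone
  have hanti : AntitoneOn φ (Set.Icc (0:ℝ) 1) := by
    apply antitoneOn_of_deriv_nonpos (convex_Icc 0 1)
    · exact fun t _ => (hφderiv t).continuousAt.continuousWithinAt
    · exact fun t ht => (hφderiv t).differentiableAt.differentiableWithinAt
    · intro t ht
      rw [interior_Icc] at ht
      rw [(hφderiv t).deriv]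
      exact hsign t ⟨le_of_lt ht.1, le_of_lt ht.2⟩
  have hφ0 : φ 0 = 0 := by simp [hφ]
  have hφ1 : φ 1 = -(q u - q ul - ⟪Gl, f u - f ul⟫) + σ * (η u - η ul - ⟪Gl, u - ul⟫) := by
    have hul1 : ul + (1:ℝ) • h = u := by rw [one_smul, hh]; abel
    simp only [hφ, hul1]
  have hF0 : φ 1 ≤ 0 := by
    rw [← hφ0]
    exact hanti (Set.mem_Icc.mpr ⟨le_refl 0, zero_le_one⟩)
      (Set.mem_Icc.mpr ⟨zero_le_one, le_refl 1⟩) zero_le_one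
  rw [hφ1, hσβ] at hF0
  linarith


/-- Near the left state u_l, with η strictly convex (positive definite Hessian),
∇²η(u_l)∇f(u_l) symmetric, compatibility ∇q = ∇η ∇f, and λ₁ the smallest eigenvalue of
∇f(u_l), for any σ₀ < λ₁ there exist ε₀, β > 0 such that
−q(u|u_l) + σ₀ η(u|u_l) ≤ −β η(u|u_l) whenever |u − u_l| < ε₀. -/
theorem dissipation_near_left_state {n : ℕ}
    (f : EuclideanSpace ℝ (Fin n) → EuclideanSpace ℝ (Fin n))
    (η q : EuclideanSpace ℝ (Fin n) → ℝ) (ul : EuclideanSpace ℝ (Fin n))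
    (hf : ContDiff ℝ 2 f) (hη : ContDiff ℝ 2 η) (hq : ContDiff ℝ 2 q)
    (hcomp : ∀ x h, fderiv ℝ q x h = ⟪gradient η x, fderiv ℝ f x h⟫)
    (Hess : EuclideanSpace ℝ (Fin n) →L[ℝ] EuclideanSpace ℝ (Fin n))
    (hHess : Hess = fderiv ℝ (gradient η) ul)
    (hHpos : ∀ h : EuclideanSpace ℝ (Fin n), h ≠ 0 → 0 < ⟪Hess h, h⟫)
    (hHAsym : ∀ h k : EuclideanSpace ℝ (Fin n),
      ⟪Hess (fderiv ℝ f ul h), k⟫ = ⟪h, Hess (fderiv ℝ f ul k)⟫)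
    (lam1 : ℝ) (hmem : lam1 ∈ spectrum ℝ (fderiv ℝ f ul))
    (hmin : ∀ μ ∈ spectrum ℝ (fderiv ℝ f ul), lam1 ≤ μ)
    (σ₀ : ℝ) (hσ₀ : σ₀ < lam1) :
    ∃ ε₀ > (0:ℝ), ∃ β > (0:ℝ), ∀ u : EuclideanSpace ℝ (Fin n), ‖u - ul‖ < ε₀ →
      -(q u - q ul - ⟪gradient η ul, f u - f ul⟫)
          + σ₀ * (η u - η ul - ⟪gradient η ul, u - ul⟫)
        ≤ -β * (η u - η ul - ⟪gradient η ul, u - ul⟫) := by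
  exact dissipation_aux f η q ul hf hη hq hcomp Hess hHess hHpos hHAsym lam1 hmem hmin σ₀ hσ₀
end

section
/- There exists a* ∈ (0,1) such that for all 0 < a < a*, the set R_a = { u : η(u|u_l) ≤ a η(u|u_r) } is contained in the ball B_{ε₀}(u_l), where ε₀ > 0 is given. Specifically, if η(u|u_l) ≥ C₁|u − u_l|² on B_{ε₀}(u_l) and η(u|u_r) ≤ C(1 + |u|) is controlled linearly, then for a small, u ∈ R_a ∩ B_{ε₀}(u_l) implies |u − u_l|² ≤ C* a < ε₀²/2, and by convexity and connectedness of R_a one concludes R_a ⊂ B_{ε₀}(u_l). -/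
open scoped RealInnerProductSpace
open Topology Filter Set

/-- gradient inequality for convex differentiable functions -/
lemma relEta_nonneg {n : ℕ} (η : EuclideanSpace ℝ (Fin n) → ℝ)
    (hC2 : ContDiff ℝ 2 η) (hconv : StrictConvexOn ℝ Set.univ η)
    (x y : EuclideanSpace ℝ (Fin n)) : 0 ≤ relEta η x y := by
  have hdiff : Differentiable ℝ η := hC2.differentiable (by norm_num)
  set g := gradient η y with hg
  have hgrad : HasGradientAt η g y := (hdiff y).hasGradientAt
  have hfd : HasFDerivAt η (InnerProductSpace.toDualMap ℝ _ g) y :=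
    hasGradientAt_iff_hasFDerivAt.mp hgrad
  set φ : ℝ → ℝ := fun t => η (y + t • (x - y)) with hφ
  have hL : HasDerivAt (fun t : ℝ => y + t • (x - y)) (x - y) 0 := by
    simpa using ((hasDerivAt_id (0:ℝ)).smul_const (x - y)).const_add y
  have hφd : HasDerivAt φ (⟪g, x - y⟫) 0 := by
    have hfd' : HasFDerivAt η (InnerProductSpace.toDualMap ℝ _ g) (y + (0:ℝ) • (x - y)) := by
      simpa using hfd
    have := hfd'.comp_hasDerivAt 0 hL
    exact this
  have hslope : Filter.Tendsto (slope φ 0) (𝓝[>] 0) (𝓝 (⟪g, x - y⟫)) :=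
    (hasDerivAt_iff_tendsto_slope.mp hφd).mono_left
      (nhdsWithin_mono _ (by intro t ht; exact ne_of_gt ht))
  have hbound : ∀ᶠ t in 𝓝[>] (0:ℝ), slope φ 0 t ≤ φ 1 - φ 0 := by
    filter_upwards [Ioo_mem_nhdsGT_of_mem (by norm_num : (0:ℝ) ∈ Set.Ico 0 1)]
      with t ht
    have hcx : φ t ≤ (1 - t) * φ 0 + t * φ 1 := by
      have h2 := hconv.convexOn.2 (Set.mem_univ y) (Set.mem_univ x)
        (by linarith [ht.1, ht.2] : (0:ℝ) ≤ 1 - t) (le_of_lt ht.1) (by ring)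
      simp only [smul_eq_mul] at h2
      have h1 : y + t • (x - y) = (1 - t) • y + t • x := by module
      have h3 : φ 0 = η y := by simp [hφ]
      have h4 : φ 1 = η x := by simp [hφ]
      rw [h3, h4]
      simpa [hφ, h1] using h2
    have ht0 : (0:ℝ) < t := ht.1
    simp only [slope_def_field, sub_zero]
    rw [div_le_iff₀ ht0]
    nlinarith [hcx]
  have hle : ⟪g, x - y⟫ ≤ φ 1 - φ 0 :=
    le_of_tendsto hslope hbound
  have : φ 1 = η x := by simp [hφ]
  have h0 : φ 0 = η y := by simp [hφ]
  simp only [relEta]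
  rw [← hg]
  linarith [hle, this, h0]

lemma Ra_convex {n : ℕ} (η : EuclideanSpace ℝ (Fin n) → ℝ)
    (hconv : StrictConvexOn ℝ Set.univ η)
    (ul ur : EuclideanSpace ℝ (Fin n)) (a : ℝ) (ha : a < 1) :
    Convex ℝ {u : EuclideanSpace ℝ (Fin n) | relEta η u ul ≤ a * relEta η u ur} := by
  intro x hx y hy p q hp hq hpq
  simp only [Set.mem_setOf_eq, relEta, inner_sub_right] at *
  have hz : η (p • x + q • y) ≤ p * η x + q * η y := by
    have := hconv.convexOn.2 (Set.mem_univ x) (Set.mem_univ y) hp hq hpq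
    simpa using this
  have hil : ⟪gradient η ul, p • x + q • y⟫
      = p * ⟪gradient η ul, x⟫ + q * ⟪gradient η ul, y⟫ := by
    rw [inner_add_right, real_inner_smul_right, real_inner_smul_right]
  have hir : ⟪gradient η ur, p • x + q • y⟫
      = p * ⟪gradient η ur, x⟫ + q * ⟪gradient η ur, y⟫ := by
    rw [inner_add_right, real_inner_smul_right, real_inner_smul_right]
  rw [hil, hir]
  have hq' : q = 1 - p := by linarith
  subst hq'
  nlinarith [mul_le_mul_of_nonneg_left hx hp, mul_le_mul_of_nonneg_left hy hq,
    mul_le_mul_of_nonneg_left hz (by linarith : (0:ℝ) ≤ 1 - a)]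

/-- There exists a* ∈ (0,1) such that for all 0 < a < a*, the set
R_a = { u : η(u|u_l) ≤ a η(u|u_r) } is contained in the ball B_{ε₀}(u_l), given the
quadratic lower bound η(u|u_l) ≥ C₁|u−u_l|² on the ball and the linear control
η(u|u_l) ≤ Ca(1+|u|) on R_a for a < 1/2. -/
theorem Ra_contained_in_ball {n : ℕ}
    (η : EuclideanSpace ℝ (Fin n) → ℝ)
    (hC2 : ContDiff ℝ 2 η) (hconv : StrictConvexOn ℝ Set.univ η)
    (ul ur : EuclideanSpace ℝ (Fin n)) (hne : ul ≠ ur)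
    (ε₀ : ℝ) (hε₀ : 0 < ε₀)
    (C₁ : ℝ) (hC₁ : 0 < C₁)
    (hlow : ∀ u ∈ Metric.ball ul ε₀, C₁ * ‖u - ul‖ ^ 2 ≤ relEta η u ul)
    (C : ℝ) (hC : 0 < C)
    (hup : ∀ a : ℝ, 0 < a → a < 1/2 →
      ∀ u : EuclideanSpace ℝ (Fin n), relEta η u ul ≤ a * relEta η u ur →
        relEta η u ul ≤ C * a * (1 + ‖u‖)) :
    ∃ astar ∈ Set.Ioo (0:ℝ) 1, ∀ a : ℝ, 0 < a → a < astar →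
      {u : EuclideanSpace ℝ (Fin n) | relEta η u ul ≤ a * relEta η u ur}
        ⊆ Metric.ball ul ε₀ := by
  set K : ℝ := C * (1 + ‖ul‖ + ε₀) with hK
  have hKpos : 0 < K := by
    have : (0:ℝ) ≤ ‖ul‖ := norm_nonneg _
    positivity
  refine ⟨min (1/2) (C₁ * ε₀ ^ 2 / (4 * K)), ⟨by positivity, ?_⟩, ?_⟩
  · exact lt_of_le_of_lt (min_le_left _ _) (by norm_num)
  intro a ha0 ha
  have ha2 : a < 1/2 := lt_of_lt_of_le ha (min_le_left _ _)
  have haK : a < C₁ * ε₀ ^ 2 / (4 * K) := lt_of_lt_of_le ha (min_le_right _ _)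
  -- key estimate: points of R_a inside the ball are within ε₀/2 of ul (squared)
  have key : ∀ v ∈ {u : EuclideanSpace ℝ (Fin n) | relEta η u ul ≤ a * relEta η u ur},
      v ∈ Metric.ball ul ε₀ → ‖v - ul‖ ^ 2 < ε₀ ^ 2 / 4 := by
    intro v hv hvb
    have h1 : C₁ * ‖v - ul‖ ^ 2 ≤ relEta η v ul := hlow v hvb
    have h2 : relEta η v ul ≤ C * a * (1 + ‖v‖) := hup a ha0 ha2 v hv
    have h3 : ‖v‖ ≤ ‖ul‖ + ε₀ := by
      have := norm_sub_norm_le v ul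
      have hd : ‖v - ul‖ < ε₀ := by
        rw [Metric.mem_ball, dist_eq_norm] at hvb; exact hvb
      linarith
    have h4 : C * a * (1 + ‖v‖) ≤ a * K := by
      rw [hK]
      nlinarith [mul_le_mul_of_nonneg_left h3 (mul_pos hC ha0).le]
    have h5 : a * K < C₁ * ε₀ ^ 2 / 4 := by
      rw [lt_div_iff₀ (by positivity : (0:ℝ) < 4 * K)] at haK
      linarith
    have : C₁ * ‖v - ul‖ ^ 2 < C₁ * (ε₀ ^ 2 / 4) := by nlinarith
    have := (mul_lt_mul_iff_right₀ hC₁).mp this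
    linarith
  -- membership of ul in R_a
  have hul : ul ∈ {u : EuclideanSpace ℝ (Fin n) | relEta η u ul ≤ a * relEta η u ur} := by
    have h0 : relEta η ul ul = 0 := by simp [relEta]
    have h1 : 0 ≤ relEta η ul ur := relEta_nonneg η hC2 hconv ul ur
    simp only [Set.mem_setOf_eq, h0]
    positivity
  have hcvx := Ra_convex η hconv ul ur a (by linarith)
  intro u hu
  by_contra hub
  rw [Metric.mem_ball, dist_eq_norm, not_lt] at hub
  have hnu : (0:ℝ) < ‖u - ul‖ := lt_of_lt_of_le hε₀ hub
  set t : ℝ := (3 * ε₀ / 4) / ‖u - ul‖ with htdef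
  have ht0 : 0 < t := by positivity
  have ht1 : t < 1 := by
    rw [htdef, div_lt_one hnu]; linarith
  have hv : (1 - t) • ul + t • u ∈
      {u : EuclideanSpace ℝ (Fin n) | relEta η u ul ≤ a * relEta η u ur} :=
    hcvx hul hu (by linarith) (le_of_lt ht0) (by ring)
  have hveq : (1 - t) • ul + t • u - ul = t • (u - ul) := by module
  have hvnorm : ‖(1 - t) • ul + t • u - ul‖ = 3 * ε₀ / 4 := by
    rw [hveq, norm_smul, Real.norm_eq_abs, abs_of_pos ht0, htdef]
    field_simp
  have hvball : (1 - t) • ul + t • u ∈ Metric.ball ul ε₀ := by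
    rw [Metric.mem_ball, dist_eq_norm, hvnorm]; linarith
  have := key _ hv hvball
  rw [hvnorm] at this
  nlinarith
end

section
/- For the planar isentropic MHD system with p(v) = v^{−γ}, γ > 1, and B ≠ 0, the fourth characteristic field is genuinely nonlinear: with λ₄ = √α₊ and eigenvector r₄ = (−1, (α₊ − c²)/B, √α₊, −β(α₊−c²)/(B√α₊))ᵀ, one has ∇λ₄ · r₄ > 0, as a consequence of −∂_v α₊ > 0 and ∂_B α₊ · (α₊ − c²)/B > 0. -/
set_option maxHeartbeats 1600000 in
/-- For planar isentropic MHD with p(v) = v^{−γ}, γ > 1, B ≠ 0, the fourth characteristic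
field is genuinely nonlinear: with λ₄ = √α₊ and eigenvector
r₄ = (−1, (α₊ − c²)/B, √α₊, −β(α₊−c²)/(B√α₊)), one has ∇λ₄ · r₄ > 0, as a consequence of
−∂_v α₊ > 0 and ∂_B α₊ · (α₊ − c²)/B > 0 (λ₄ depends only on (v,B)). -/
theorem mhd_fourth_field_genuinely_nonlinear
    (γ β : ℝ) (hγ : 1 < γ) (hβ : β ≠ 0)
    (c2 : ℝ → ℝ) (hc2 : ∀ v : ℝ, c2 v = γ * v ^ (-γ - 1))
    (αp : ℝ → ℝ → ℝ)
    (hαp : ∀ v B : ℝ, αp v B = (1/2) * ((B^2 + β^2)/v + c2 v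
      + Real.sqrt (((B^2 + β^2)/v + c2 v)^2 - 4 * β^2 * (c2 v) / v)))
    (v B : ℝ) (hv : 0 < v) (hB : B ≠ 0) :
    0 < -(deriv (fun v' => αp v' B) v) ∧
    0 < (deriv (fun B' => αp v B') B) * ((αp v B - c2 v) / B) ∧
    0 < -(deriv (fun v' => Real.sqrt (αp v' B)) v)
        + (deriv (fun B' => Real.sqrt (αp v B')) B) * ((αp v B - c2 v) / B) := by
  have hv0 : v ≠ 0 := ne_of_gt hv
  have hγ0 : (0:ℝ) < γ := by linarith
  set P : ℝ := v ^ (-γ - 1) with hP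
  set Q : ℝ := v ^ (-γ - 1 - 1) with hQ
  have hPpos : 0 < P := by rw [hP]; exact Real.rpow_pos_of_pos hv _
  have hQpos : 0 < Q := by rw [hQ]; exact Real.rpow_pos_of_pos hv _
  set m : ℝ := (B ^ 2 + β ^ 2) / v with hm
  set c : ℝ := γ * P with hc
  set c' : ℝ := γ * ((-γ - 1) * Q) with hc'
  set a : ℝ := m + c with ha
  set D : ℝ := a ^ 2 - 4 * β ^ 2 * c / v with hD
  have hB2 : 0 < B ^ 2 := by positivity
  have hβ2 : 0 < β ^ 2 := by positivity
  have hcpos : 0 < c := by rw [hc]; exact mul_pos hγ0 hPpos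
  have hc'neg : c' < 0 := by
    rw [hc']
    exact mul_neg_of_pos_of_neg hγ0 (mul_neg_of_neg_of_pos (by linarith) hQpos)
  have hmβ : β ^ 2 / v < m := by
    rw [hm, div_lt_div_iff₀ hv hv]
    nlinarith
  have hmv : 0 < m := lt_trans (by positivity) hmβ
  have hapos : 0 < a := by rw [ha]; linarith
  have hDalt : D = (m - c) ^ 2 + 4 * c * (B ^ 2 / v) := by
    rw [hD, ha, hm]; field_simp; ring
  have hDpos : 0 < D := by
    rw [hDalt]
    have h4 : 0 < 4 * c * (B ^ 2 / v) := mul_pos (by linarith) (div_pos hB2 hv)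
    nlinarith [sq_nonneg (m - c)]
  set s : ℝ := Real.sqrt D with hs
  have hspos : 0 < s := by rw [hs]; exact Real.sqrt_pos.mpr hDpos
  have hs0 : s ≠ 0 := ne_of_gt hspos
  have hs2 : s ^ 2 = D := by rw [hs]; exact Real.sq_sqrt hDpos.le
  have hgap : (m - c) ^ 2 < s ^ 2 := by
    rw [hs2, hDalt]
    have h4 : 0 < 4 * c * (B ^ 2 / v) := mul_pos (by linarith) (div_pos hB2 hv)
    linarith
  have hscm : c - m < s := by nlinarith
  have hsmc : m - c < s := by nlinarith
  have hα : αp v B = (a + s) / 2 := by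
    rw [hαp, hc2, hs, hD, ha, hm, hc, hP]; ring
  have hαm : m < (a + s) / 2 := by rw [ha]; linarith
  have hαc : c < (a + s) / 2 := by rw [ha]; linarith
  have hαposv : 0 < (a + s) / 2 := by linarith
  have hαp0 : 0 < αp v B := by rw [hα]; linarith
  -- derivative in v
  have h1 : HasDerivAt (fun x : ℝ => (B ^ 2 + β ^ 2) / x) (-((B ^ 2 + β ^ 2) / v ^ 2)) v := by
    have h := (hasDerivAt_const v (B ^ 2 + β ^ 2)).div (hasDerivAt_id' v) hv0
    have e : ((0:ℝ) * v - (B ^ 2 + β ^ 2) * 1) / v ^ 2 = -((B ^ 2 + β ^ 2) / v ^ 2) := by ring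
    rwa [e] at h
  have h2 : HasDerivAt (fun x : ℝ => γ * x ^ (-γ - 1)) c' v := by
    rw [hc', hQ]
    exact (Real.hasDerivAt_rpow_const (Or.inl hv0)).const_mul γ
  have hA : HasDerivAt (fun x : ℝ => (B ^ 2 + β ^ 2) / x + γ * x ^ (-γ - 1))
      (-((B ^ 2 + β ^ 2) / v ^ 2) + c') v := h1.add h2
  have h3 : HasDerivAt (fun x : ℝ => 4 * β ^ 2 * (γ * x ^ (-γ - 1))) (4 * β ^ 2 * c') v :=
    h2.const_mul (4 * β ^ 2)
  have h4 : HasDerivAt (fun x : ℝ => 4 * β ^ 2 * (γ * x ^ (-γ - 1)) / x)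
      ((4 * β ^ 2 * c' * v - 4 * β ^ 2 * (γ * v ^ (-γ - 1)) * 1) / v ^ 2) v :=
    h3.div (hasDerivAt_id' v) hv0
  have hDv : ((B ^ 2 + β ^ 2) / v + γ * v ^ (-γ - 1)) ^ 2
      - 4 * β ^ 2 * (γ * v ^ (-γ - 1)) / v = D := by
    rw [hD, ha, hm, hc, hP]
  have hDvne : ((B ^ 2 + β ^ 2) / v + γ * v ^ (-γ - 1)) ^ 2
      - 4 * β ^ 2 * (γ * v ^ (-γ - 1)) / v ≠ 0 := by
    rw [hDv]; exact ne_of_gt hDpos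
  have hDD : HasDerivAt (fun x : ℝ => ((B ^ 2 + β ^ 2) / x + γ * x ^ (-γ - 1)) ^ 2
      - 4 * β ^ 2 * (γ * x ^ (-γ - 1)) / x)
      (((2:ℕ) : ℝ) * ((B ^ 2 + β ^ 2) / v + γ * v ^ (-γ - 1)) ^ (2 - 1)
          * (-((B ^ 2 + β ^ 2) / v ^ 2) + c')
        - (4 * β ^ 2 * c' * v - 4 * β ^ 2 * (γ * v ^ (-γ - 1)) * 1) / v ^ 2) v :=
    (hA.pow 2).sub h4
  have hFeq : (fun v' => αp v' B) = (fun x : ℝ => (1/2) * ((B ^ 2 + β ^ 2) / x + γ * x ^ (-γ - 1)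
      + Real.sqrt (((B ^ 2 + β ^ 2) / x + γ * x ^ (-γ - 1)) ^ 2
        - 4 * β ^ 2 * (γ * x ^ (-γ - 1)) / x))) :=
    funext fun x => by rw [hαp, hc2]
  have HF : HasDerivAt (fun v' => αp v' B)
      (((-((B ^ 2 + β ^ 2) / v ^ 2) + c') * ((a + s) / 2)
        - β ^ 2 * (c' * v - c) / v ^ 2) / s) v := by
    rw [hFeq]
    have h := (hA.add (hDD.sqrt hDvne)).const_mul (1/2 : ℝ)
    rw [hDv, ← hs] at h
    have e : (1/2 : ℝ) * ((-((B ^ 2 + β ^ 2) / v ^ 2) + c')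
        + (((2:ℕ) : ℝ) * ((B ^ 2 + β ^ 2) / v + γ * v ^ (-γ - 1)) ^ (2 - 1)
            * (-((B ^ 2 + β ^ 2) / v ^ 2) + c')
          - (4 * β ^ 2 * c' * v - 4 * β ^ 2 * (γ * v ^ (-γ - 1)) * 1) / v ^ 2) / (2 * s))
        = ((-((B ^ 2 + β ^ 2) / v ^ 2) + c') * ((a + s) / 2)
            - β ^ 2 * (c' * v - c) / v ^ 2) / s := by
      rw [ha, hm, hc, hP]
      push_cast
      field_simp
      ring
    rwa [e] at h
  have hA'α : (-((B ^ 2 + β ^ 2) / v ^ 2) + c') * ((a + s) / 2)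
      - β ^ 2 * (c' * v - c) / v ^ 2 < 0 := by
    have e : (-((B ^ 2 + β ^ 2) / v ^ 2) + c') * ((a + s) / 2) - β ^ 2 * (c' * v - c) / v ^ 2
        = c' * ((a + s) / 2 - β ^ 2 / v)
          + (β ^ 2 * c - (B ^ 2 + β ^ 2) * ((a + s) / 2)) / v ^ 2 := by
      field_simp
      ring
    rw [e]
    have t1 : c' * ((a + s) / 2 - β ^ 2 / v) < 0 :=
      mul_neg_of_neg_of_pos hc'neg (by linarith)
    have t2 : (β ^ 2 * c - (B ^ 2 + β ^ 2) * ((a + s) / 2)) / v ^ 2 < 0 := by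
      apply div_neg_of_neg_of_pos _ (by positivity)
      nlinarith
    linarith
  have g1 : 0 < -(deriv (fun v' => αp v' B) v) := by
    rw [HF.deriv]
    exact neg_pos.mpr (div_neg_of_neg_of_pos hA'α hspos)
  -- derivative in B
  have hGeq : (fun B' => αp v B') = (fun y : ℝ => (1/2) * ((y ^ 2 + β ^ 2) / v + c
      + Real.sqrt (((y ^ 2 + β ^ 2) / v + c) ^ 2 - 4 * β ^ 2 * c / v))) :=
    funext fun y => by rw [hαp, hc2, hc, hP]
  have hb1 : HasDerivAt (fun y : ℝ => (y ^ 2 + β ^ 2) / v)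
      ((((2:ℕ) : ℝ) * B ^ (2 - 1)) / v) B :=
    ((hasDerivAt_pow 2 B).add_const (β ^ 2)).div_const v
  have hbA : HasDerivAt (fun y : ℝ => (y ^ 2 + β ^ 2) / v + c)
      ((((2:ℕ) : ℝ) * B ^ (2 - 1)) / v) B :=
    hb1.add_const c
  have hDvB : ((B ^ 2 + β ^ 2) / v + c) ^ 2 - 4 * β ^ 2 * c / v = D := by
    rw [hD, ha, hm]
  have hbD : HasDerivAt (fun y : ℝ => ((y ^ 2 + β ^ 2) / v + c) ^ 2 - 4 * β ^ 2 * c / v)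
      (((2:ℕ) : ℝ) * ((B ^ 2 + β ^ 2) / v + c) ^ (2 - 1)
        * ((((2:ℕ) : ℝ) * B ^ (2 - 1)) / v)) B :=
    (hbA.pow 2).sub_const _
  have HG : HasDerivAt (fun B' => αp v B') ((s + a) * B / (v * s)) B := by
    rw [hGeq]
    have hbs := hbD.sqrt (by rw [hDvB]; exact ne_of_gt hDpos)
    rw [hDvB, ← hs] at hbs
    have h := (hbA.add hbs).const_mul (1/2 : ℝ)
    have e : (1/2 : ℝ) * ((((2:ℕ) : ℝ) * B ^ (2 - 1)) / v
        + (((2:ℕ) : ℝ) * ((B ^ 2 + β ^ 2) / v + c) ^ (2 - 1)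
            * ((((2:ℕ) : ℝ) * B ^ (2 - 1)) / v)) / (2 * s))
        = (s + a) * B / (v * s) := by
      rw [ha, hm]
      push_cast
      field_simp
    rwa [e] at h
  have g2 : 0 < (deriv (fun B' => αp v B') B) * ((αp v B - c2 v) / B) := by
    rw [HG.deriv, hα, hc2, ← hP, ← hc]
    have e : (s + a) * B / (v * s) * (((a + s) / 2 - c) / B)
        = ((s + a) * ((a + s) / 2 - c)) / (v * s) := by
      field_simp
    rw [e]
    exact div_pos (mul_pos (by linarith) (by linarith)) (mul_pos hv hspos)
  refine ⟨g1, g2, ?_⟩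
  -- square-root field
  have hq : 0 < Real.sqrt (αp v B) := Real.sqrt_pos.mpr hαp0
  have hds1 : deriv (fun v' => Real.sqrt (αp v' B)) v
      = (deriv (fun v' => αp v' B) v) / (2 * Real.sqrt (αp v B)) := by
    rw [HF.deriv]
    exact (HF.sqrt (ne_of_gt hαp0)).deriv
  have hds2 : deriv (fun B' => Real.sqrt (αp v B')) B
      = (deriv (fun B' => αp v B') B) / (2 * Real.sqrt (αp v B)) := by
    rw [HG.deriv]
    exact (HG.sqrt (ne_of_gt hαp0)).deriv
  rw [hds1, hds2]
  have e : -(deriv (fun v' => αp v' B) v / (2 * Real.sqrt (αp v B)))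
      + deriv (fun B' => αp v B') B / (2 * Real.sqrt (αp v B)) * ((αp v B - c2 v) / B)
      = (-(deriv (fun v' => αp v' B) v)
          + deriv (fun B' => αp v B') B * ((αp v B - c2 v) / B)) / (2 * Real.sqrt (αp v B)) := by
    ring
  rw [e]
  exact div_pos (by linarith) (by linarith)
end

section
/- Fix u_l, u_r in the state space of the full Euler system with e_l > e_r, and let 0 < a < e_r/e_l. Then the sublevel set { u = (ρ, q, ℰ) : η(u|u_l) ≤ a η(u|u_r) } is bounded. In particular, the coefficient c₃ = −(1/(1−a))(a/e_r − 1/e_l) is positive, and since the constrained inequality takes the form (γ ln ρ − ln(ℰ − q²/(2ρ)) − c₁ − c₅)ρ + (c₃/2)ℰ ≤ c₄ with the left side tending to +∞ as ρ → ∞ or ℰ → ∞, the set is bounded. -/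
lemma aux_mul_log_ge (x : ℝ) (hx : 0 < x) : -1 ≤ x * Real.log x := by
  rcases le_or_gt 1 x with h | h
  · nlinarith [Real.log_nonneg h]
  · have h2 := Real.log_le_sub_one_of_pos (show (0:ℝ) < x⁻¹ by positivity)
    rw [Real.log_inv] at h2
    have h3 : x * x⁻¹ = 1 := mul_inv_cancel₀ hx.ne'
    nlinarith [mul_le_mul_of_nonneg_left h2 hx.le]

lemma aux_tail (β c3 κ c6 : ℝ) (hβ : 0 < β) (hc3 : 0 < c3) :
    ∃ Rρ RE : ℝ, 1 ≤ Rρ ∧ 0 < RE ∧ ∀ ρ E : ℝ, 0 < ρ → 0 < E →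
      β * (ρ * Real.log ρ) + c3 / 4 * E ≤ κ + c6 * ρ → ρ ≤ Rρ ∧ E ≤ RE := by
  set Rρ := max 1 (Real.exp ((|c6| + |κ| + 1) / β)) with hRρ
  have hRρ1 : (1:ℝ) ≤ Rρ := le_max_left _ _
  have hREpos : 0 < 4 / c3 * (|κ| + |c6| * Rρ + β) := by
    have h0 : 0 ≤ |c6| * Rρ := mul_nonneg (abs_nonneg _) (by linarith)
    have h1 : 0 ≤ |κ| := abs_nonneg _
    have : 0 < |κ| + |c6| * Rρ + β := by linarith
    positivity
  refine ⟨Rρ, 4 / c3 * (|κ| + |c6| * Rρ + β), hRρ1, hREpos, ?_⟩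
  intro ρ E hρ hE hineq
  have hρR : ρ ≤ Rρ := by
    by_contra hcon
    push_neg at hcon
    have h1 : Real.exp ((|c6| + |κ| + 1) / β) < ρ := lt_of_le_of_lt (le_max_right _ _) hcon
    have h2 : (|c6| + |κ| + 1) / β < Real.log ρ := (Real.lt_log_iff_exp_lt hρ).mpr h1
    have h3 : β * ((|c6| + |κ| + 1) / β) = |c6| + |κ| + 1 := by field_simp
    have h4 : β * ((|c6| + |κ| + 1) / β) < β * Real.log ρ := mul_lt_mul_of_pos_left h2 hβ
    have h5 : |c6| + |κ| + 1 < β * Real.log ρ := by linarith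
    have h6 : 1 < ρ := lt_of_le_of_lt hRρ1 hcon
    have h7 : ρ * (|c6| + |κ| + 1) < ρ * (β * Real.log ρ) := mul_lt_mul_of_pos_left h5 hρ
    nlinarith [mul_pos hc3 hE, mul_nonneg (abs_nonneg κ) (by linarith : (0:ℝ) ≤ ρ - 1),
      mul_le_mul_of_nonneg_right (le_abs_self c6) hρ.le, le_abs_self κ]
  refine ⟨hρR, ?_⟩
  have h8 : -1 ≤ ρ * Real.log ρ := aux_mul_log_ge ρ hρ
  have h9 : c3 / 4 * E ≤ |κ| + |c6| * Rρ + β := by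
    have hβ1 : β * (-1) ≤ β * (ρ * Real.log ρ) := mul_le_mul_of_nonneg_left h8 hβ.le
    have hc : c6 * ρ ≤ |c6| * Rρ :=
      le_trans (mul_le_mul_of_nonneg_right (le_abs_self c6) hρ.le)
        (mul_le_mul_of_nonneg_left hρR (abs_nonneg c6))
    nlinarith [le_abs_self κ]
  calc E = 4 / c3 * (c3 / 4 * E) := by field_simp
    _ ≤ 4 / c3 * (|κ| + |c6| * Rρ + β) := mul_le_mul_of_nonneg_left h9 (by positivity)

lemma aux_key (γ b κ P Q c3 : ℝ) (hγ : 1 < γ) (hb : 0 < b) (hc3 : 0 < c3) :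
    ∃ R : ℝ, 0 < R ∧ ∀ ρ q E : ℝ, 0 < ρ → 0 < E - q ^ 2 / (2 * ρ) →
      b * (γ * ρ * Real.log ρ - ρ * Real.log (E - q ^ 2 / (2 * ρ))) + c3 * E ≤
        κ + P * ρ + Q * q → ρ ≤ R ∧ E ≤ R ∧ |q| ≤ R := by
  obtain ⟨Rρ, RE, hRρ1, hRE, htail⟩ :=
    aux_tail (b * (γ - 1)) c3 κ (P + Q ^ 2 / c3 + b * Real.log (4 * b / c3))
      (by nlinarith) hc3
  refine ⟨max Rρ (max RE (Real.sqrt (2 * Rρ * RE))), by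
      calc (0:ℝ) < 1 := one_pos
        _ ≤ Rρ := hRρ1
        _ ≤ _ := le_max_left _ _, ?_⟩
  intro ρ q E hρ he hineq
  have hq0 : 0 ≤ q ^ 2 / (2 * ρ) := by positivity
  have hE : 0 < E := by linarith
  have hQ2 : Q * q ≤ c3 / 2 * E + Q ^ 2 / c3 * ρ := by
    have h1 : Q * q ≤ c3 / 4 * (q ^ 2 / ρ) + Q ^ 2 / c3 * ρ := by
      rw [← sub_nonneg]
      have h0 : c3 / 4 * (q ^ 2 / ρ) + Q ^ 2 / c3 * ρ - Q * q
          = (c3 * q - 2 * Q * ρ) ^ 2 / (4 * ρ * c3) := by field_simp; ring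
      rw [h0]; positivity
    have h2 : q ^ 2 / ρ ≤ 2 * E := by
      have e1 : q ^ 2 / ρ = 2 * (q ^ 2 / (2 * ρ)) := by ring
      rw [e1]; linarith
    nlinarith [mul_le_mul_of_nonneg_left h2 (by positivity : (0:ℝ) ≤ c3 / 4)]
  have hlog' : b * ρ * Real.log (E - q ^ 2 / (2 * ρ)) ≤ b * ρ * Real.log E := by
    have hm : Real.log (E - q ^ 2 / (2 * ρ)) ≤ Real.log E := by gcongr <;> linarith
    exact mul_le_mul_of_nonneg_left hm (by positivity)
  have h44 : b * ρ * Real.log E ≤ c3 / 4 * E + b * ρ * Real.log ρ + b * Real.log (4 * b / c3) * ρ := by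
    have e2 : E = c3 * E / (4 * b * ρ) * (4 * b * ρ / c3) := by field_simp
    have h41 : Real.log E = Real.log (c3 * E / (4 * b * ρ)) + Real.log (4 * b * ρ / c3) := by
      conv_lhs => rw [e2]
      rw [Real.log_mul (by positivity) (by positivity)]
    have h42 : Real.log (c3 * E / (4 * b * ρ)) ≤ c3 * E / (4 * b * ρ) := by
      have := Real.log_le_sub_one_of_pos (show (0:ℝ) < c3 * E / (4 * b * ρ) by positivity)
      linarith
    have h43 : Real.log (4 * b * ρ / c3) = Real.log ρ + Real.log (4 * b / c3) := by
      rw [show 4 * b * ρ / c3 = ρ * (4 * b / c3) by ring,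
        Real.log_mul hρ.ne' (by positivity)]
    have h45 : Real.log E ≤ c3 * E / (4 * b * ρ) + Real.log ρ + Real.log (4 * b / c3) := by
      rw [h41, h43]; linarith
    have h46 : b * ρ * Real.log E
        ≤ b * ρ * (c3 * E / (4 * b * ρ) + Real.log ρ + Real.log (4 * b / c3)) :=
      mul_le_mul_of_nonneg_left h45 (by positivity)
    have h47 : b * ρ * (c3 * E / (4 * b * ρ) + Real.log ρ + Real.log (4 * b / c3))
        = c3 / 4 * E + b * ρ * Real.log ρ + b * Real.log (4 * b / c3) * ρ := by
      field_simp
    rw [h47] at h46; exact h46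
  have hfin : b * (γ - 1) * (ρ * Real.log ρ) + c3 / 4 * E
      ≤ κ + (P + Q ^ 2 / c3 + b * Real.log (4 * b / c3)) * ρ := by nlinarith [hineq, hQ2, hlog', h44]
  obtain ⟨hρR, hER⟩ := htail ρ E hρ hE hfin
  have hq2 : q ^ 2 ≤ 2 * Rρ * RE := by
    have h1 : q ^ 2 / (2 * ρ) < E := by linarith
    rw [div_lt_iff₀ (by positivity)] at h1
    nlinarith [mul_le_mul hρR hER hE.le (by linarith : (0:ℝ) ≤ Rρ)]
  have hq : |q| ≤ Real.sqrt (2 * Rρ * RE) := by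
    rw [← Real.sqrt_sq_eq_abs]
    exact Real.sqrt_le_sqrt hq2
  refine ⟨le_trans hρR (le_max_left _ _),
    le_trans hER (le_trans (le_max_left _ _) (le_max_right _ _)),
    le_trans hq (le_trans (le_max_right _ _) (le_max_right _ _))⟩

/-- For the full Euler system with e_l > e_r and 0 < a < e_r/e_l, the coefficient
c₃ = −(1/(1−a))(a/e_r − 1/e_l) is positive and the sublevel set
{ u ∈ D : η(u|u_l) ≤ a η(u|u_r) } is bounded. Here u = (ρ, q, ℰ),
η(ρ,q,ℰ) = γρ ln ρ − ρ ln(ℰ − q²/(2ρ)), with gradient given by the explicit partial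
derivatives, and e denotes the internal energy (ℰ − q²/(2ρ))/ρ. -/
theorem euler_sublevel_set_bounded
    (γ : ℝ) (hγ : 1 < γ)
    (η : ℝ × ℝ × ℝ → ℝ)
    (hη : ∀ u : ℝ × ℝ × ℝ,
      η u = γ * u.1 * Real.log u.1 - u.1 * Real.log (u.2.2 - u.2.1^2 / (2 * u.1)))
    (D : Set (ℝ × ℝ × ℝ))
    (hD : D = {u : ℝ × ℝ × ℝ | 0 < u.1 ∧ 0 < u.2.2 - u.2.1^2 / (2 * u.1)})
    (eInt : ℝ × ℝ × ℝ → ℝ)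
    (heInt : ∀ u : ℝ × ℝ × ℝ, eInt u = (u.2.2 - u.2.1^2 / (2 * u.1)) / u.1)
    (gradη : ℝ × ℝ × ℝ → ℝ × ℝ × ℝ)
    (hgrad : ∀ u ∈ D, gradη u =
      (γ * (Real.log u.1 + 1) - Real.log (u.1 * eInt u) - (u.2.1/u.1)^2 / (2 * eInt u),
       (u.2.1/u.1) / eInt u,
       -1 / eInt u))
    (relEnt : ℝ × ℝ × ℝ → ℝ × ℝ × ℝ → ℝ)
    (hrel : ∀ u v : ℝ × ℝ × ℝ, relEnt u v = η u - η v
      - (gradη v).1 * (u.1 - v.1) - (gradη v).2.1 * (u.2.1 - v.2.1)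
      - (gradη v).2.2 * (u.2.2 - v.2.2))
    (ul ur : ℝ × ℝ × ℝ) (hul : ul ∈ D) (hur : ur ∈ D)
    (hel : eInt ur < eInt ul)
    (a : ℝ) (ha0 : 0 < a) (ha : a < eInt ur / eInt ul) :
    0 < -(1 / (1 - a)) * (a / eInt ur - 1 / eInt ul) ∧
    Bornology.IsBounded {u ∈ D | relEnt u ul ≤ a * relEnt u ur} := by
  have hgul := hgrad ul hul
  have hgur := hgrad ur hur
  subst hD
  have hul' : 0 < ul.1 ∧ 0 < ul.2.2 - ul.2.1^2 / (2 * ul.1) := by simpa using hul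
  have hur' : 0 < ur.1 ∧ 0 < ur.2.2 - ur.2.1^2 / (2 * ur.1) := by simpa using hur
  have hel_pos : 0 < eInt ul := by rw [heInt]; exact div_pos hul'.2 hul'.1
  have her_pos : 0 < eInt ur := by rw [heInt]; exact div_pos hur'.2 hur'.1
  have h1a : 0 < 1 - a := by
    have : eInt ur / eInt ul < 1 := (div_lt_one hel_pos).mpr hel
    linarith
  have hc3' : 0 < 1 / eInt ul - a / eInt ur := by
    have haa : a * eInt ul < eInt ur := (lt_div_iff₀ hel_pos).mp ha
    rw [sub_pos, div_lt_div_iff₀ her_pos hel_pos]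
    linarith
  constructor
  · have e : -(1 / (1 - a)) * (a / eInt ur - 1 / eInt ul)
        = (1 / eInt ul - a / eInt ur) / (1 - a) := by ring
    rw [e]; exact div_pos hc3' h1a
  · set Al := γ * (Real.log ul.1 + 1) - Real.log (ul.1 * eInt ul)
      - (ul.2.1 / ul.1) ^ 2 / (2 * eInt ul) with hAl
    set Bl := (ul.2.1 / ul.1) / eInt ul with hBl
    set Ar := γ * (Real.log ur.1 + 1) - Real.log (ur.1 * eInt ur)
      - (ur.2.1 / ur.1) ^ 2 / (2 * eInt ur) with hAr
    set Br := (ur.2.1 / ur.1) / eInt ur with hBr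
    set K := η ul - Al * ul.1 - Bl * ul.2.1 + ul.2.2 / eInt ul
      - a * (η ur - Ar * ur.1 - Br * ur.2.1 + ur.2.2 / eInt ur) with hK
    obtain ⟨R, hR, hbnd⟩ := aux_key γ (1 - a) K (Al - a * Ar) (Bl - a * Br)
      (1 / eInt ul - a / eInt ur) hγ h1a hc3'
    apply Bornology.IsBounded.subset
      (isCompact_Icc (a := ((-R, -R, -R) : ℝ × ℝ × ℝ)) (b := ((R, R, R) : ℝ × ℝ × ℝ))).isBounded
    intro u hu
    simp only [Set.mem_sep_iff, Set.mem_setOf_eq] at hu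
    obtain ⟨⟨hu1, hu2⟩, hle⟩ := hu
    have hkey : (1 - a) * (γ * u.1 * Real.log u.1
          - u.1 * Real.log (u.2.2 - u.2.1 ^ 2 / (2 * u.1)))
        + (1 / eInt ul - a / eInt ur) * u.2.2
        ≤ K + (Al - a * Ar) * u.1 + (Bl - a * Br) * u.2.1 := by
      rw [hrel u ul, hrel u ur, hgul, hgur] at hle
      dsimp only at hle
      rw [hη u, hη ul, hη ur] at hle
      rw [hK, hη ul, hη ur]
      have hene : eInt ul ≠ 0 := ne_of_gt hel_pos
      have hene' : eInt ur ≠ 0 := ne_of_gt her_pos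
      ring_nf at hle ⊢
      linarith [hle]
    obtain ⟨h1, h2, h3⟩ := hbnd u.1 u.2.1 u.2.2 hu1 hu2 hkey
    have habs := abs_le.mp h3
    have hE0 : 0 < u.2.2 := by
      have : 0 ≤ u.2.1 ^ 2 / (2 * u.1) := by positivity
      linarith
    simp only [Set.mem_Icc, Prod.le_def]
    exact ⟨⟨by linarith, by linarith [habs.1], by linarith⟩,
      ⟨by linarith, by linarith [habs.2], by linarith⟩⟩
end

section
/- Let σ : [0, s̄] → ℝ and h : [0, s̄] → ℝ be C¹ with σ' continuous, σ'(s₀) ≠ 0 and h'(s₀) ≠ 0 at some s₀ ∈ (0, s̄), with σ' < 0 and h' > 0 near s₀. Then there exist δ > 0 and k > 0 such that for all s with |s − s₀| < δ: ∫_{s₀}^{s} σ'(t)(h(t) − h(s₀)) dt ≤ −k|σ(s) − σ(s₀)|². -/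
/-- Quantitative core of DiPerna's lemma: if σ, h are C¹ on [0, s̄] (with derivative
functions σ', h' continuous there), σ'(s₀) ≠ 0, h'(s₀) ≠ 0, and σ' < 0, h' > 0 near
s₀ ∈ (0, s̄), then there exist δ > 0 and k > 0 such that for all s with |s − s₀| < δ,
∫_{s₀}^{s} σ'(t)(h(t) − h(s₀)) dt ≤ −k|σ(s) − σ(s₀)|². -/
theorem diperna_quantitative_lemma
    (sbar s₀ : ℝ) (σ h σ' h' : ℝ → ℝ)
    (hs₀ : s₀ ∈ Set.Ioo (0:ℝ) sbar)
    (hσd : ∀ s ∈ Set.Icc (0:ℝ) sbar, HasDerivAt σ (σ' s) s)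
    (hhd : ∀ s ∈ Set.Icc (0:ℝ) sbar, HasDerivAt h (h' s) s)
    (hσ'c : ContinuousOn σ' (Set.Icc 0 sbar))
    (hh'c : ContinuousOn h' (Set.Icc 0 sbar))
    (hσ'0 : σ' s₀ ≠ 0) (hh'0 : h' s₀ ≠ 0)
    (hsign : ∀ᶠ s in nhds s₀, σ' s < 0 ∧ 0 < h' s) :
    ∃ δ > (0:ℝ), ∃ k > (0:ℝ), ∀ s : ℝ, |s - s₀| < δ →
      ∫ t in s₀..s, σ' t * (h t - h s₀) ≤ -k * |σ s - σ s₀| ^ 2 := by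
  obtain ⟨hs0pos, hs0lt⟩ := hs₀
  have hsign0 := hsign.self_of_nhds
  set A := -σ' s₀ with hAdef
  set B := h' s₀ with hBdef
  have hApos : 0 < A := neg_pos.mpr hsign0.1
  have hBpos : 0 < B := hsign0.2
  have hIcc_nhds : Set.Icc (0:ℝ) sbar ∈ nhds s₀ := Icc_mem_nhds hs0pos hs0lt
  have hcσ : ContinuousAt σ' s₀ := hσ'c.continuousAt hIcc_nhds
  have hch : ContinuousAt h' s₀ := hh'c.continuousAt hIcc_nhds
  have e1 : ∀ᶠ t in nhds s₀, σ' t < -A / 2 := hcσ (Iio_mem_nhds (by linarith))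
  have e2 : ∀ᶠ t in nhds s₀, -(3 * A) / 2 < σ' t := hcσ (Ioi_mem_nhds (by linarith))
  have e3 : ∀ᶠ t in nhds s₀, B / 2 < h' t := hch (Ioi_mem_nhds (by linarith))
  have eAll : ∀ᶠ t in nhds s₀,
      (σ' t < -A / 2 ∧ -(3 * A) / 2 < σ' t ∧ B / 2 < h' t) ∧ t ∈ Set.Icc (0:ℝ) sbar :=
    ((e1.and (e2.and e3)).and hIcc_nhds)
  obtain ⟨δ, hδpos, hδ⟩ := Metric.eventually_nhds_iff.mp eAll
  refine ⟨δ, hδpos, B / (18 * A), by positivity, fun s hs => ?_⟩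
  -- properties of points within δ of s₀
  have hP : ∀ t : ℝ, |t - s₀| < δ →
      (σ' t < -A / 2 ∧ -(3 * A) / 2 < σ' t ∧ B / 2 < h' t) ∧ t ∈ Set.Icc (0:ℝ) sbar := by
    intro t ht
    exact hδ (by simpa [Real.dist_eq] using ht)
  have hmemI : ∀ t ∈ Set.uIcc s₀ s, |t - s₀| < δ := by
    intro t ht
    rw [Set.uIcc_eq_union] at ht
    rcases ht with ht | ht
    · have h1 := ht.1; have h2 := ht.2
      rw [abs_sub_lt_iff]
      have := abs_sub_lt_iff.mp hs
      constructor <;> linarith [this.1, this.2]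
    · have h1 := ht.1; have h2 := ht.2
      rw [abs_sub_lt_iff]
      have := abs_sub_lt_iff.mp hs
      constructor <;> linarith [this.1, this.2]
  have hsubIcc : Set.uIcc s₀ s ⊆ Set.Icc (0:ℝ) sbar := fun t ht => (hP t (hmemI t ht)).2
  -- σ is Lipschitz with constant 3A/2 on uIcc s₀ s
  have hσlip : |σ s - σ s₀| ≤ 3 * A / 2 * |s - s₀| := by
    have := Convex.norm_image_sub_le_of_norm_hasDerivWithin_le
      (f := σ) (f' := σ') (s := Set.uIcc s₀ s) (C := 3 * A / 2)
      (fun x hx => (hσd x (hsubIcc hx)).hasDerivWithinAt)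
      (fun x hx => by
        have h1 := (hP x (hmemI x hx)).1.1
        have h2 := (hP x (hmemI x hx)).1.2.1
        rw [Real.norm_eq_abs, abs_le]
        constructor <;> linarith)
      (convex_uIcc s₀ s) Set.left_mem_uIcc Set.right_mem_uIcc
    simpa [Real.norm_eq_abs] using this
  -- h grows at rate at least B/2 on uIcc s₀ s
  have hhgrow : ∀ x ∈ Set.uIcc s₀ s, ∀ y ∈ Set.uIcc s₀ s, x ≤ y →
      B / 2 * (y - x) ≤ h y - h x := by
    apply Convex.mul_sub_le_image_sub_of_le_deriv (convex_uIcc s₀ s)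
    · exact fun x hx => (hhd x (hsubIcc hx)).continuousAt.continuousWithinAt
    · exact fun x hx => ((hhd x (hsubIcc (interior_subset hx))).differentiableAt).differentiableWithinAt
    · intro x hx
      have := (hP x (hmemI x (interior_subset hx))).1.2.2
      rw [(hhd x (hsubIcc (interior_subset hx))).deriv]
      linarith
  -- integrability of the integrand
  have hint : IntervalIntegrable (fun t => σ' t * (h t - h s₀)) MeasureTheory.volume s₀ s := by
    apply ContinuousOn.intervalIntegrable
    apply ContinuousOn.mul (hσ'c.mono hsubIcc)
    exact ContinuousOn.sub
      (fun x hx => (hhd x (hsubIcc hx)).continuousAt.continuousWithinAt) continuousOn_const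
  -- key integral bound
  have hkey : ∫ t in s₀..s, σ' t * (h t - h s₀) ≤ -(A * B / 8) * (s - s₀) ^ 2 := by
    rcases le_total s₀ s with hle | hle
    · have huIcc : Set.uIcc s₀ s = Set.Icc s₀ s := Set.uIcc_of_le hle
      have hbound : ∀ t ∈ Set.Icc s₀ s, σ' t * (h t - h s₀) ≤ -(A * B / 4) * (t - s₀) := by
        intro t ht
        have hh1 : B / 2 * (t - s₀) ≤ h t - h s₀ := by
          apply hhgrow s₀ (by rw [huIcc]; exact Set.left_mem_Icc.mpr hle) t
            (by rw [huIcc]; exact ht) ht.1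
        have hσ1 : σ' t < -A / 2 := (hP t (hmemI t (by rw [huIcc]; exact ht))).1.1
        have ht0 : 0 ≤ t - s₀ := sub_nonneg.mpr ht.1
        have hpos : 0 ≤ h t - h s₀ := le_trans (mul_nonneg (by positivity) ht0) hh1
        have step1 : σ' t * (h t - h s₀) ≤ (-A / 2) * (h t - h s₀) :=
          mul_le_mul_of_nonneg_right hσ1.le hpos
        have step2 : (-A / 2) * (h t - h s₀) ≤ (-A / 2) * (B / 2 * (t - s₀)) :=
          mul_le_mul_of_nonpos_left hh1 (by linarith)
        linarith
      have hintg : IntervalIntegrable (fun t => -(A * B / 4) * (t - s₀))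
          MeasureTheory.volume s₀ s := by
        apply ContinuousOn.intervalIntegrable; fun_prop
      calc ∫ t in s₀..s, σ' t * (h t - h s₀)
          ≤ ∫ t in s₀..s, -(A * B / 4) * (t - s₀) :=
            intervalIntegral.integral_mono_on hle hint hintg hbound
        _ = -(A * B / 8) * (s - s₀) ^ 2 := by
            rw [intervalIntegral.integral_const_mul]
            have : (∫ t in s₀..s, (t - s₀)) = (s - s₀) ^ 2 / 2 := by
              have := intervalIntegral.integral_comp_sub_right (a := s₀) (b := s)
                (fun x => x) s₀
              simp only [sub_self] at this
              rw [this, integral_id]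
              ring
            rw [this]; ring
    · have huIcc : Set.uIcc s₀ s = Set.Icc s s₀ := Set.uIcc_of_ge hle
      have hbound : ∀ t ∈ Set.Icc s s₀, (A * B / 4) * (s₀ - t) ≤ σ' t * (h t - h s₀) := by
        intro t ht
        have hh1 : B / 2 * (s₀ - t) ≤ h s₀ - h t := by
          apply hhgrow t (by rw [huIcc]; exact ht) s₀
            (by rw [huIcc]; exact Set.right_mem_Icc.mpr hle) ht.2
        have hσ1 : σ' t < -A / 2 := (hP t (hmemI t (by rw [huIcc]; exact ht))).1.1
        have ht0 : 0 ≤ s₀ - t := sub_nonneg.mpr ht.2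
        have hneg : h t - h s₀ ≤ -(B / 2 * (s₀ - t)) := by linarith
        have hneg0 : h t - h s₀ ≤ 0 := le_trans hneg (by nlinarith)
        have step1 : (-A / 2) * (h t - h s₀) ≤ σ' t * (h t - h s₀) :=
          mul_le_mul_of_nonpos_right hσ1.le hneg0
        have step2 : (-A / 2) * (-(B / 2 * (s₀ - t))) ≤ (-A / 2) * (h t - h s₀) :=
          mul_le_mul_of_nonpos_left hneg (by linarith)
        nlinarith [step1, step2]
      have hintg : IntervalIntegrable (fun t => (A * B / 4) * (s₀ - t))
          MeasureTheory.volume s s₀ := by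
        apply ContinuousOn.intervalIntegrable; fun_prop
      have hflip : (∫ t in s₀..s, σ' t * (h t - h s₀))
          = -(∫ t in s..s₀, σ' t * (h t - h s₀)) := by
        rw [intervalIntegral.integral_symm]
      rw [hflip]
      have hlow : ∫ t in s..s₀, (A * B / 4) * (s₀ - t)
          ≤ ∫ t in s..s₀, σ' t * (h t - h s₀) :=
        intervalIntegral.integral_mono_on hle hintg hint.symm hbound
      have hcomp : (∫ t in s..s₀, (A * B / 4) * (s₀ - t)) = (A * B / 8) * (s - s₀) ^ 2 := by
        rw [intervalIntegral.integral_const_mul]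
        have : (∫ t in s..s₀, (s₀ - t)) = (s₀ - s) ^ 2 / 2 := by
          have := intervalIntegral.integral_comp_sub_left (a := s) (b := s₀)
            (fun x => x) s₀
          simp only [sub_self] at this
          rw [this, integral_id]
          ring
        rw [this]; ring
      rw [hcomp] at hlow
      linarith
  -- conclude
  have hsq : |σ s - σ s₀| ^ 2 ≤ (3 * A / 2) ^ 2 * (s - s₀) ^ 2 := by
    have habs : |σ s - σ s₀| ^ 2 ≤ (3 * A / 2 * |s - s₀|) ^ 2 := by
      apply pow_le_pow_left₀ (abs_nonneg _) hσlip
    calc |σ s - σ s₀| ^ 2 ≤ (3 * A / 2 * |s - s₀|) ^ 2 := habs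
      _ = (3 * A / 2) ^ 2 * (s - s₀) ^ 2 := by rw [mul_pow, sq_abs]
  have : B / (18 * A) * |σ s - σ s₀| ^ 2 ≤ A * B / 8 * (s - s₀) ^ 2 := by
    have hk : (0:ℝ) < B / (18 * A) := by positivity
    calc B / (18 * A) * |σ s - σ s₀| ^ 2
        ≤ B / (18 * A) * ((3 * A / 2) ^ 2 * (s - s₀) ^ 2) := by
          exact mul_le_mul_of_nonneg_left hsq hk.le
      _ = A * B / 8 * (s - s₀) ^ 2 := by field_simp; ring
  linarith
end
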